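/- arXiv:1707.04413 — 4 statements merged into one kernel-verified Lean document; each statement's English description precedes it below -/
import Mathlib

section
/- Suppose p satisfies SYM and fix a set U⊆[n]. Then the following four distributions on pairs (assignment, pinned factor graph) are identical: (1) draw σ⁽¹⁾=σ* uniform, draw the teacher-student graph G*(σ⁽¹⁾), pin U to σ⁽¹⁾, and output (σ⁽¹⁾, G*(σ⁽¹⁾)_{U,σ⁽¹⁾}); (2) draw G=G*, draw σ⁽²⁾ from μ_G, and output (σ⁽²⁾, G_{U,σ⁽²⁾}); (3) draw σ uniform, form G⁽³⁾=G*(σ)_{U,σ}, draw σ⁽³⁾ from μ_{G⁽³⁾}, and output (σ⁽³⁾, G⁽³⁾); (4) draw G'=G*, draw σ' from μ_{G'}, form G⁽⁴⁾=G'_{U,σ'}, draw σ⁽⁴⁾ from μ_{G⁽⁴⁾}, and output (σ⁽⁴⁾, G⁽⁴⁾). -/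
open MeasureTheory Filter
open scoped BigOperators Classical

noncomputable section

namespace TS

/-- `Λ(x) = x ln x`, with `Λ(0)=0` (since `Real.log 0 = 0`). -/
def Lam (x : ℝ) : ℝ := x * Real.log x

/-- The simplex of probability vectors on a finite set `Ω`, i.e. `𝒫(Ω)`. -/
def ProbVec (Ω : Type*) [Fintype Ω] : Type _ :=
  {μ : Ω → ℝ // (∀ a, 0 ≤ μ a) ∧ ∑ a, μ a = 1}

instance (Ω : Type*) [Fintype Ω] : MeasurableSpace (ProbVec Ω) := by
  unfold ProbVec; infer_instance

variable {Ω : Type*} [Fintype Ω] {k : ℕ} {Ψ : Type*} [Fintype Ψ]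

/-- `𝒫²_*(Ω)`: probability measures on `𝒫(Ω)` whose mean is the uniform distribution. -/
def P2star (Ω : Type*) [Fintype Ω] (π : Measure (ProbVec Ω)) : Prop :=
  IsProbabilityMeasure π ∧ ∀ a : Ω, (∫ μ, (μ : ProbVec Ω).1 a ∂π) = (Fintype.card Ω : ℝ)⁻¹

/-- product of `m` copies of a measure on the simplex -/
def piPV (Ω : Type*) [Fintype Ω] (m : ℕ) (π : Measure (ProbVec Ω)) :
    Measure (Fin m → ProbVec Ω) :=
  Measure.pi fun _ => π

/-- `ξ = |Ω|^{-k} ∑_τ E[ψ(τ)]`. -/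
def xi (k : ℕ) (w : Ψ → (Fin k → Ω) → ℝ) (p : Ψ → ℝ) : ℝ :=
  (∑ τ : Fin k → Ω, ∑ ψ, p ψ * w ψ τ) / (Fintype.card Ω : ℝ) ^ k

/-- SYM: `E[ψ(τ)] = ξ` for every `τ ∈ Ω^k`. -/
def SYM (k : ℕ) (w : Ψ → (Fin k → Ω) → ℝ) (p : Ψ → ℝ) : Prop :=
  ∀ τ : Fin k → Ω, ∑ ψ, p ψ * w ψ τ = xi k w p

/-- POS. -/
def POS (k : ℕ) (hk : 0 < k) (w : Ψ → (Fin k → Ω) → ℝ) (p : Ψ → ℝ) : Prop :=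
  ∀ π π' : Measure (ProbVec Ω), P2star Ω π → P2star Ω π' →
    0 ≤ ∑ ψ, p ψ *
      ∫ μ, (∫ μ', (Lam (∑ τ : Fin k → Ω, w ψ τ * ∏ i, (μ i).1 (τ i))
          + ((k : ℝ) - 1) * Lam (∑ τ : Fin k → Ω, w ψ τ * ∏ i, (μ' i).1 (τ i))
          - (k : ℝ) * Lam (∑ τ : Fin k → Ω, w ψ τ *
              ((μ ⟨0, hk⟩).1 (τ ⟨0, hk⟩) *
                ∏ i ∈ Finset.univ.erase ⟨0, hk⟩, (μ' i).1 (τ i))))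
        ∂(piPV Ω k π')) ∂(piPV Ω k π)

/-- the inner expectation in the first Bethe term, for a fixed value `γ` of the degree. -/
def BetheInner (k : ℕ) (w : Ψ → (Fin k → Ω) → ℝ) (p : Ψ → ℝ)
    (π : Measure (ProbVec Ω)) (γ : ℕ) : ℝ :=
  ∑ ψs : Fin γ → Ψ, ∑ hs : Fin γ → Fin k,
    (∏ i, p (ψs i)) * ((k : ℝ) ^ γ)⁻¹ *
      ∫ μs, Lam (∑ σ : Ω, ∏ i : Fin γ,
          ∑ τ : Fin k → Ω, (if τ (hs i) = σ then (1 : ℝ) else 0) * w (ψs i) τ *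
            ∏ j ∈ Finset.univ.erase (hs i), (μs i j).1 (τ j))
        ∂(Measure.pi fun _ : Fin γ => piPV Ω k π)

/-- `E[Λ(∑_τ ψ(τ) ∏_j μ_j(τ_j))]` with `ψ ∼ p` and `μ_1,…,μ_k` iid from `π`. -/
def BetheE2 (k : ℕ) (w : Ψ → (Fin k → Ω) → ℝ) (p : Ψ → ℝ)
    (π : Measure (ProbVec Ω)) : ℝ :=
  ∑ ψ, p ψ * ∫ μs, Lam (∑ τ : Fin k → Ω, w ψ τ * ∏ j, (μs j).1 (τ j)) ∂(piPV Ω k π)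

/-- mean of a degree distribution `D` on `ℕ`. -/
def meanD (D : ℕ → ℝ) : ℝ := ∑' ℓ : ℕ, D ℓ * ℓ

/-- The Bethe functional `B(D,π)`. -/
def Bethe (k : ℕ) (w : Ψ → (Fin k → Ω) → ℝ) (p : Ψ → ℝ) (D : ℕ → ℝ)
    (π : Measure (ProbVec Ω)) : ℝ :=
  (Fintype.card Ω : ℝ)⁻¹ *
      (∑' γ : ℕ, D γ * ((xi k w p ^ γ)⁻¹ * BetheInner k w p π γ))
    - ((k : ℝ) - 1) / ((k : ℝ) * xi k w p) * meanD D * BetheE2 k w p π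

/-- `sup_{π ∈ 𝒫²_*(Ω)} B(D,π)`. -/
def BetheSup (Ω : Type*) [Fintype Ω] (k : ℕ) (w : Ψ → (Fin k → Ω) → ℝ) (p : Ψ → ℝ)
    (D : ℕ → ℝ) : ℝ :=
  sSup {b : ℝ | ∃ π : Measure (ProbVec Ω), P2star Ω π ∧ b = Bethe k w p D π}

/-! ### Factor graphs and the configuration model -/

/-- an (ordered) check-node neighbourhood on `n` variables. -/
abbrev CNode (n k : ℕ) := Fin k → Fin n

/-- an unweighted factor graph: the ordered list of its check-node neighbourhoods. -/
abbrev UGraph (n k : ℕ) := List (CNode n k)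

/-- a weighted factor graph: each check node carries a weight function index from `Ψ`. -/
abbrev WGraph (n k : ℕ) (Ψ : Type*) := List (CNode n k × Ψ)

def unw {n k : ℕ} {Ψ : Type*} (G : WGraph n k Ψ) : UGraph n k := G.map Prod.fst

/-- the flattened list of sockets visited by a list of check nodes. -/
def flatten {n k : ℕ} (G : UGraph n k) : List (Fin n) :=
  G.flatMap fun a => List.ofFn a

/-- probability of drawing the given sequence of variable nodes, one at a time,
with probability proportional to the remaining degrees, updating after each draw. -/
def seqDrawProb {n : ℕ} : (Fin n → ℕ) → List (Fin n) → ℝ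
  | _, [] => 1
  | δ, x :: xs =>
      ((δ x : ℝ) / ∑ y, (δ y : ℝ)) * seqDrawProb (Function.update δ x (δ x - 1)) xs

/-- mass function of the configuration model with degree sequence `d`:
the sockets are drawn one at a time proportionally to the remaining degrees and every
`k` consecutive draws form a check node. -/
def cmMass (n k : ℕ) (d : Fin n → ℕ) (G : UGraph n k) : ℝ :=
  (if G.length = (∑ x, d x) / k then (1 : ℝ) else 0) * seqDrawProb d (flatten G)

/-- `d` is a `D`-partition of `[n]`: for each `ℓ`, a `D(ℓ)` fraction of the variables
has degree `ℓ`. -/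
def isDPart (n : ℕ) (D : ℕ → ℝ) (d : Fin n → ℕ) : Prop :=
  ∀ ℓ : ℕ, ((Finset.univ.filter fun x => d x = ℓ).card : ℝ) = n * D ℓ

/-- mass function of a uniformly random `D`-partition of `[n]`. -/
def dMass (n : ℕ) (D : ℕ → ℝ) (d : Fin n → ℕ) : ℝ :=
  (if isDPart n D d then (1 : ℝ) else 0) /
    (Nat.card {d' : Fin n → ℕ // isDPart n D d'} : ℝ)

/-- mass function of the unweighted random `(D,k)`-graph `G_D` on `[n]`. -/
def ugLaw (n k : ℕ) (D : ℕ → ℝ) (G : UGraph n k) : ℝ :=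
  ∑' d : Fin n → ℕ, dMass n D d * cmMass n k d G

/-- total weight `ψ_G(σ)` of an assignment. -/
def gWeight {n k : ℕ} (w : Ψ → (Fin k → Ω) → ℝ) (G : WGraph n k Ψ) (σ : Fin n → Ω) : ℝ :=
  (G.map fun a => w a.2 fun j => σ (a.1 j)).prod

/-- the partition function `Z(G)`. -/
def Z {n k : ℕ} (w : Ψ → (Fin k → Ω) → ℝ) (G : WGraph n k Ψ) : ℝ :=
  ∑ σ : Fin n → Ω, gWeight w G σ

/-- the Gibbs measure `μ_G`. -/
def gibbs {n k : ℕ} (w : Ψ → (Fin k → Ω) → ℝ) (G : WGraph n k Ψ) (σ : Fin n → Ω) : ℝ :=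
  gWeight w G σ / Z w G

/-- probability that the teacher assigns the given weights to the check nodes of `G`,
given the ground truth `σ`. -/
def twMass {n k : ℕ} (w : Ψ → (Fin k → Ω) → ℝ) (p : Ψ → ℝ) (σ : Fin n → Ω)
    (G : WGraph n k Ψ) : ℝ :=
  (G.map fun a => p a.2 * w a.2 (fun j => σ (a.1 j)) /
      ∑ ψ', p ψ' * w ψ' fun j => σ (a.1 j)).prod

/-- joint mass function of `(σ*, G*_D)` in the `(D,k)` teacher–student model. -/
def tsJoint (n k : ℕ) (w : Ψ → (Fin k → Ω) → ℝ) (p : Ψ → ℝ) (D : ℕ → ℝ)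
    (σ : Fin n → Ω) (G : WGraph n k Ψ) : ℝ :=
  ((Fintype.card Ω : ℝ) ^ n)⁻¹ * ugLaw n k D (unw G) * twMass w p σ G

/-- mutual information of a joint mass function on `A × B`. -/
def MI {A B : Type*} (J : A → B → ℝ) : ℝ :=
  ∑' a : A, ∑' b : B, J a b *
    Real.log (J a b / ((∑' b' : B, J a b') * (∑' a' : A, J a' b)))

/-- `E[ln Z(G*_D)]`. -/
def ElnZ (n k : ℕ) (w : Ψ → (Fin k → Ω) → ℝ) (p : Ψ → ℝ) (D : ℕ → ℝ) : ℝ :=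
  ∑' G : WGraph n k Ψ, (∑ σ : Fin n → Ω, tsJoint n k w p D σ G) * Real.log (Z w G)

end TS

namespace TS

/-- joint mass of `(σ*, G*(σ*))` in the teacher–student model whose unweighted graph
structure is drawn from an arbitrary law `q` independent of `σ*`. -/
def tsJointQ (n k : ℕ) {Ω : Type*} [Fintype Ω] {Ψ : Type*} [Fintype Ψ]
    (w : Ψ → (Fin k → Ω) → ℝ) (p : Ψ → ℝ) (q : UGraph n k → ℝ)
    (σ : Fin n → Ω) (G : WGraph n k Ψ) : ℝ :=
  ((Fintype.card Ω : ℝ) ^ n)⁻¹ * q (unw G) * twMass w p σ G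

variable {Ω : Type*} [Fintype Ω] {Ψ : Type*} [Fintype Ψ]

/-- restriction of an assignment to the pinned set `U`. -/
def restr {n : ℕ} (U : Finset (Fin n)) (σ : Fin n → Ω) : {x // x ∈ U} → Ω :=
  fun x => σ x.1

/-- partition function of the graph `G` pinned on `U` to the values `v`. -/
def Zpin {n k : ℕ} (w : Ψ → (Fin k → Ω) → ℝ) (G : WGraph n k Ψ)
    (U : Finset (Fin n)) (v : {x // x ∈ U} → Ω) : ℝ :=
  ∑ σ : Fin n → Ω, if restr U σ = v then gWeight w G σ else 0

/-- Gibbs measure of the graph `G` pinned on `U` to the values `v`. -/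
def gibbsPin {n k : ℕ} (w : Ψ → (Fin k → Ω) → ℝ) (G : WGraph n k Ψ)
    (U : Finset (Fin n)) (v : {x // x ∈ U} → Ω) (σ : Fin n → Ω) : ℝ :=
  (if restr U σ = v then gWeight w G σ else 0) / Zpin w G U v

end TS

namespace TS

private lemma twMass_eq {Ω : Type*} [Fintype Ω] {Ψ : Type*} [Fintype Ψ]
    {n k : ℕ} (w : Ψ → (Fin k → Ω) → ℝ) (p : Ψ → ℝ) (hSYM : TS.SYM k w p)
    (σ : Fin n → Ω) (G : TS.WGraph n k Ψ) :
    TS.twMass w p σ G = (G.map fun a => p a.2 / TS.xi k w p).prod * TS.gWeight w G σ := by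
  induction G with
  | nil => simp [TS.twMass, TS.gWeight]
  | cons a G ih =>
    simp only [TS.twMass, TS.gWeight, List.map_cons, List.prod_cons] at *
    rw [ih, hSYM]
    ring

private lemma gWeight_pos {Ω : Type*} [Fintype Ω] {Ψ : Type*} [Fintype Ψ]
    {n k : ℕ} {w : Ψ → (Fin k → Ω) → ℝ} (hw : ∀ ψ τ, w ψ τ ∈ Set.Ioo (0 : ℝ) 2)
    (G : TS.WGraph n k Ψ) (σ : Fin n → Ω) : 0 < TS.gWeight w G σ := by
  apply List.prod_pos
  intro x hx
  rcases List.mem_map.1 hx with ⟨a, _, rfl⟩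
  exact (hw _ _).1

private lemma Z_pos {Ω : Type*} [Fintype Ω] [Nonempty Ω] {Ψ : Type*} [Fintype Ψ]
    {n k : ℕ} {w : Ψ → (Fin k → Ω) → ℝ} (hw : ∀ ψ τ, w ψ τ ∈ Set.Ioo (0 : ℝ) 2)
    (G : TS.WGraph n k Ψ) : 0 < TS.Z w G :=
  Finset.sum_pos (fun σ _ => gWeight_pos hw G σ) ⟨Classical.arbitrary _, Finset.mem_univ _⟩

private lemma Zpin_pos {Ω : Type*} [Fintype Ω] [Nonempty Ω] {Ψ : Type*} [Fintype Ψ]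
    {n k : ℕ} {w : Ψ → (Fin k → Ω) → ℝ} (hw : ∀ ψ τ, w ψ τ ∈ Set.Ioo (0 : ℝ) 2)
    (G : TS.WGraph n k Ψ) (U : Finset (Fin n)) (v : {x // x ∈ U} → Ω) :
    0 < TS.Zpin w G U v := by
  apply Finset.sum_pos'
  · intro σ _
    split
    · exact (gWeight_pos hw G σ).le
    · exact le_rfl
  · refine ⟨fun x => if h : x ∈ U then v ⟨x, h⟩ else Classical.arbitrary Ω,
      Finset.mem_univ _, ?_⟩
    have : TS.restr U (fun x => if h : x ∈ U then v ⟨x, h⟩ else Classical.arbitrary Ω) = v := by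
      funext x
      simp [TS.restr, x.2]
    rw [if_pos this]
    exact gWeight_pos hw G _

end TS

open TS in
/-- **Pinning preserves the Nishimori property.** Under SYM, for any fixed pinned set `U`
the following four distributions on triples
(output assignment, weighted graph, pin values on `U`) — encoding pairs of assignments and
pinned factor graphs — coincide:
(1) `σ* → G*(σ*) → pin U to σ*`, output `σ*`;
(2) `G* → σ⁽²⁾ ∼ μ_{G*} → pin U to σ⁽²⁾`, output `σ⁽²⁾`;
(3) `σ → G⁽³⁾ = G*(σ)_{U,σ}`, output `σ⁽³⁾ ∼ μ_{G⁽³⁾}`;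
(4) `G* → σ' ∼ μ_{G*} → G⁽⁴⁾ = G*_{U,σ'}`, output `σ⁽⁴⁾ ∼ μ_{G⁽⁴⁾}`. -/
theorem pinning_preserves_nishimori
    {Ω : Type*} [Fintype Ω] [Nonempty Ω] {Ψ : Type*} [Fintype Ψ] [Nonempty Ψ]
    (n k : ℕ) (hk : 1 < k)
    (w : Ψ → (Fin k → Ω) → ℝ) (p : Ψ → ℝ)
    (hw : ∀ ψ τ, w ψ τ ∈ Set.Ioo (0 : ℝ) 2)
    (hp0 : ∀ ψ, 0 ≤ p ψ) (hp1 : ∑ ψ, p ψ = 1)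
    (hSYM : TS.SYM k w p)
    (q : TS.UGraph n k → ℝ) (hq0 : ∀ G, 0 ≤ q G) (hq1 : ∑' G : TS.UGraph n k, q G = 1)
    (U : Finset (Fin n)) :
    ∀ (σ : Fin n → Ω) (G : TS.WGraph n k Ψ) (v : {x // x ∈ U} → Ω),
      -- mass functions of the four experiments agree at `(σ, G, v)`:
      (TS.tsJointQ n k w p q σ G * (if TS.restr U σ = v then 1 else 0) =
        (∑ σ' : Fin n → Ω, TS.tsJointQ n k w p q σ' G) * TS.gibbs w G σ *
          (if TS.restr U σ = v then 1 else 0)) ∧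
      ((∑ σ' : Fin n → Ω, TS.tsJointQ n k w p q σ' G) * TS.gibbs w G σ *
          (if TS.restr U σ = v then 1 else 0) =
        (∑ σ₀ : Fin n → Ω,
            TS.tsJointQ n k w p q σ₀ G * (if TS.restr U σ₀ = v then 1 else 0)) *
          TS.gibbsPin w G U v σ) ∧
      ((∑ σ₀ : Fin n → Ω,
            TS.tsJointQ n k w p q σ₀ G * (if TS.restr U σ₀ = v then 1 else 0)) *
          TS.gibbsPin w G U v σ =
        (∑ σ' : Fin n → Ω, TS.tsJointQ n k w p q σ' G) *
          (∑ σ₀ : Fin n → Ω, TS.gibbs w G σ₀ * (if TS.restr U σ₀ = v then 1 else 0)) *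
          TS.gibbsPin w G U v σ) := by
  intro σ G v
  set c : ℝ := ((Fintype.card Ω : ℝ) ^ n)⁻¹ * q (TS.unw G) *
      (G.map fun a => p a.2 / TS.xi k w p).prod with hc
  have hts : ∀ σ' : Fin n → Ω, TS.tsJointQ n k w p q σ' G = c * TS.gWeight w G σ' := by
    intro σ'
    rw [TS.tsJointQ, TS.twMass_eq w p hSYM]
    ring
  have hZ : TS.Z w G ≠ 0 := (TS.Z_pos hw G).ne'
  have hZp : TS.Zpin w G U v ≠ 0 := (TS.Zpin_pos hw G U v).ne'
  have hsum : (∑ σ' : Fin n → Ω, TS.tsJointQ n k w p q σ' G) = c * TS.Z w G := by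
    simp only [hts, TS.Z, Finset.mul_sum]
  have hsumpin : (∑ σ₀ : Fin n → Ω,
      TS.tsJointQ n k w p q σ₀ G * (if TS.restr U σ₀ = v then 1 else 0)) =
      c * TS.Zpin w G U v := by
    simp only [hts, TS.Zpin, Finset.mul_sum, mul_ite, mul_one, mul_zero]
  have hgpin : (∑ σ₀ : Fin n → Ω, TS.gibbs w G σ₀ * (if TS.restr U σ₀ = v then 1 else 0)) =
      TS.Zpin w G U v / TS.Z w G := by
    simp only [TS.gibbs, TS.Zpin, Finset.sum_div, mul_ite, mul_one, mul_zero]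
    congr 1
    funext σ₀
    split <;> simp
  refine ⟨?_, ?_, ?_⟩
  · have h1 : c * TS.gWeight w G σ = c * TS.Z w G * TS.gibbs w G σ := by
      rw [TS.gibbs]
      field_simp
    rw [hts, hsum, h1]
  · rw [hsum, hsumpin, TS.gibbs, TS.gibbsPin]
    field_simp
    split <;> ring
  · rw [hsum, hsumpin, hgpin]
    field_simp
end
end

section
/- Let V be a finite set, δ:V→ℕ not identically zero, and c:V→ℤ with c(v)≤δ(v) for all v∈V and 0 ≤ ∑_{v∈V} c(v) < ∑_{v∈V} δ(v). Define δ'(v)=(δ(v)−c(v))_+=δ(v)−c(v), and the probability distributions ν(v)=δ(v)/∑_y δ(y) and ν'(v)=δ'(v)/∑_y δ'(y) on V. Then ‖ν−ν'‖_TV ≤ (∑_{v∈V} max(c(v),0)) / (∑_{v∈V} δ(v) − ∑_{v∈V} c(v)). -/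
open scoped BigOperators

/-- **Total variation bound for perturbed residual-degree distributions.**
If `δ' = δ − c` (with `c v ≤ δ v` pointwise and `0 ≤ ∑ c < ∑ δ`), and
`ν ∝ δ`, `ν' ∝ δ'`, then `‖ν−ν'‖_TV = ∑_v (ν v − ν' v)₊ ≤ (∑_v (c v)₊)/(∑ δ − ∑ c)`. -/
theorem tv_dist_residual_degree_bound {V : Type*} [Fintype V]
    (δ : V → ℕ) (c : V → ℤ)
    (hδ : ∃ v, δ v ≠ 0)
    (hc : ∀ v, c v ≤ (δ v : ℤ))
    (hc0 : 0 ≤ ∑ v, c v)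
    (hclt : ∑ v, c v < ∑ v, (δ v : ℤ)) :
    ∑ v, max ((δ v : ℝ) / (∑ y, (δ y : ℝ))
        - ((δ v : ℝ) - (c v : ℝ)) / (∑ y, ((δ y : ℝ) - (c y : ℝ)))) 0
      ≤ (∑ v, max ((c v : ℝ)) 0) / ((∑ v, (δ v : ℝ)) - ∑ v, (c v : ℝ)) := by
  set S : ℝ := ∑ y, (δ y : ℝ) with hSdef
  set C : ℝ := ∑ v, (c v : ℝ) with hCdef
  have hC0 : (0:ℝ) ≤ C := by
    have : (0:ℝ) ≤ ((∑ v, c v : ℤ) : ℝ) := by exact_mod_cast hc0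
    simpa [hCdef] using this
  have hS : (0:ℝ) < S := by
    obtain ⟨v, hv⟩ := hδ
    apply Finset.sum_pos' (fun i _ => by positivity)
    exact ⟨v, Finset.mem_univ v, by exact_mod_cast Nat.pos_of_ne_zero hv⟩
  have hS' : (0:ℝ) < S - C := by
    have : ((∑ v, c v : ℤ) : ℝ) < ((∑ v, (δ v : ℤ) : ℤ) : ℝ) := by exact_mod_cast hclt
    push_cast at this
    simpa [hSdef, hCdef] using sub_pos.mpr this
  have hsum : ∑ y, ((δ y:ℝ) - (c y:ℝ)) = S - C := by
    rw [Finset.sum_sub_distrib]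
  rw [hsum, Finset.sum_div]
  apply Finset.sum_le_sum
  intro v _
  have hterm : (δ v : ℝ) / S - ((δ v : ℝ) - (c v : ℝ)) / (S - C)
      = ((c v : ℝ) * S - (δ v : ℝ) * C) / (S * (S - C)) := by
    field_simp
    ring
  rw [hterm]
  have h1 : ((c v : ℝ) * S - (δ v : ℝ) * C) / (S * (S - C))
      ≤ ((c v : ℝ) * S) / (S * (S - C)) := by
    gcongr
    exact sub_le_self _ (by positivity)
  calc max (((c v : ℝ) * S - (δ v : ℝ) * C) / (S * (S - C))) 0
      ≤ max (((c v : ℝ) * S) / (S * (S - C))) 0 := max_le_max h1 le_rfl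
    _ = max ((c v : ℝ) / (S - C)) (0 / (S - C)) := by
        rw [zero_div, show (c v:ℝ) * S / (S * (S - C)) = (c v:ℝ) / (S - C) by
          rw [mul_comm S (S - C), mul_div_mul_right _ _ hS.ne']]
    _ = max ((c v : ℝ)) 0 / (S - C) := by
        rw [max_div_div_right hS'.le]
end

section
/- Let k≥1 be an integer, η∈(0,1/2), Ω={−1,1}, and let Ψ={ψ_1,ψ_{−1}} with ψ_s(σ)=1+s(1−2η)∏_{i=1}^k σ_i for s∈{±1} and σ∈Ω^k, equipped with the uniform distribution p. Then: (i) SYM holds with ξ=1, i.e. E_{ψ∼p}[ψ(σ)]=1 for every σ∈Ω^k; and (ii) POS holds, i.e. for all probability measures π,π' on P(Ω) whose mean is the uniform distribution on Ω, with μ_1,…,μ_k iid from π, μ'_1,…,μ'_k iid from π', and ψ from p, all mutually independent, E[Λ(∑_{τ∈Ω^k}ψ(τ)∏_{i=1}^k μ_i(τ_i)) + (k−1)Λ(∑_{τ∈Ω^k}ψ(τ)∏_{i=1}^k μ'_i(τ_i)) − kΛ(∑_{τ∈Ω^k}ψ(τ)μ_1(τ_1)∏_{i=2}^k μ'_i(τ_i))]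 ≥ 0. -/
open MeasureTheory Filter
open scoped BigOperators Classical

noncomputable section

namespace TS

/-- the spin value `±1` encoded by a Boolean. -/
def sval (b : Bool) : ℝ := if b then 1 else -1

/-- the LDGM weight functions `ψ_s(σ) = 1 + s(1−2η)∏_i σ_i`, `s ∈ {±1}`,
on the spin alphabet `Ω = {±1}` (encoded by `Bool`). -/
def ldgmW (k : ℕ) (η : ℝ) (s : Bool) (σ : Fin k → Bool) : ℝ :=
  1 + sval s * (1 - 2 * η) * ∏ i, sval (σ i)

end TS

namespace TS
namespace Aux

def dfun (μ : ProbVec Bool) : ℝ := μ.1 true - μ.1 false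

lemma pv_sum (μ : ProbVec Bool) : μ.1 true + μ.1 false = 1 := by
  have := μ.2.2; rwa [Fintype.sum_bool] at this

lemma abs_dfun_le (μ : ProbVec Bool) : |dfun μ| ≤ 1 := by
  have h1 := μ.2.1 true; have h2 := μ.2.1 false; have h3 := pv_sum μ
  rw [abs_le]; constructor <;> [skip; skip] <;> simp [dfun] <;> linarith

lemma key_sum {k : ℕ} (F : Fin k → Bool → ℝ) :
    ∑ τ : Fin k → Bool, ∏ i, F i (τ i) = ∏ i, (F i true + F i false) := by
  have := Finset.prod_univ_sum (fun _ : Fin k => (Finset.univ : Finset Bool)) F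
  rw [Fintype.piFinset_univ] at this
  rw [← this]
  congr 1; ext i; rw [Fintype.sum_bool]

lemma sum_eq {k : ℕ} (η : ℝ) (s : Bool) (v : Fin k → ProbVec Bool) :
    ∑ τ : Fin k → Bool, ldgmW k η s τ * ∏ i, (v i).1 (τ i)
      = 1 + sval s * (1 - 2 * η) * ∏ i, dfun (v i) := by
  have e1 : ∀ τ : Fin k → Bool, ldgmW k η s τ * ∏ i, (v i).1 (τ i)
      = (∏ i, (v i).1 (τ i)) + sval s * (1 - 2*η) * ∏ i, (sval (τ i) * (v i).1 (τ i)) := by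
    intro τ
    rw [ldgmW, add_mul, one_mul, mul_assoc, ← Finset.prod_mul_distrib]
  rw [Finset.sum_congr rfl (fun τ _ => e1 τ), Finset.sum_add_distrib, key_sum,
    ← Finset.mul_sum, key_sum (fun i b => sval b * (v i).1 b)]
  have : ∀ i, (v i).1 true + (v i).1 false = 1 := fun i => pv_sum (v i)
  simp only [this, Finset.prod_const_one]
  have h2 : ∀ x, sval true * (v x).1 true + sval false * (v x).1 false = dfun (v x) := by
    intro x; simp [sval, dfun]; ring
  rw [Finset.prod_congr rfl (fun x _ => h2 x)]

lemma hasSum_gfun {u : ℝ} (hu : |u| < 1) :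
    HasSum (fun n : ℕ => u ^ (2*n+2) / ((2*(n:ℝ)+1) * (2*(n:ℝ)+2)))
      (2⁻¹ * (Lam (1+u) + Lam (1-u))) := by
  have hu' : |(-u)| < 1 := by rwa [abs_neg]
  have h1 := Real.hasSum_pow_div_log_of_abs_lt_one hu
  have h2 := Real.hasSum_pow_div_log_of_abs_lt_one hu'
  rw [sub_neg_eq_add] at h2
  have hd := h1.sub h2
  have hs := h1.add h2
  have hinj1 : Function.Injective (fun m : ℕ => 2*m) := fun a b h => by
    simp only at h; omega
  have hinj2 : Function.Injective (fun m : ℕ => 2*m+1) := fun a b h => by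
    simp only at h; omega
  have HS1 := (hinj1.hasSum_iff (f := fun n : ℕ => u^(n+1)/(n+1) - (-u)^(n+1)/(n+1))
    (by
      intro x hx
      have hodd : Odd x := by
        rcases Nat.even_or_odd x with h | h
        · obtain ⟨m, hm⟩ := h
          exact absurd (Set.mem_range.mpr ⟨m, by omega⟩) hx
        · exact h
      have he : Even (x+1) := Odd.add_one hodd
      show u^(x+1)/(x+1) - (-u)^(x+1)/(x+1) = 0
      rw [he.neg_pow]; ring)).mpr hd
  have HS2 := (hinj2.hasSum_iff (f := fun n : ℕ => u^(n+1)/(n+1) + (-u)^(n+1)/(n+1))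
    (by
      intro x hx
      have heven : Even x := by
        rcases Nat.even_or_odd x with h | h
        · exact h
        · obtain ⟨m, hm⟩ := h
          exact absurd (Set.mem_range.mpr ⟨m, by omega⟩) hx
      have ho : Odd (x+1) := Even.add_one heven
      show u^(x+1)/(x+1) + (-u)^(x+1)/(x+1) = 0
      rw [ho.neg_pow]; ring)).mpr hs
  have H := ((HS1.mul_left u).sub HS2).mul_left 2⁻¹
  have e1 : (fun n : ℕ => u ^ (2*n+2) / ((2*(n:ℝ)+1) * (2*(n:ℝ)+2)))
      = fun n : ℕ => 2⁻¹ * (u * ((fun n : ℕ => u^(n+1)/(n+1) - (-u)^(n+1)/(n+1)) ∘ (fun m => 2*m)) n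
          - ((fun n : ℕ => u^(n+1)/(n+1) + (-u)^(n+1)/(n+1)) ∘ (fun m => 2*m+1)) n) := by
    funext n
    have hodd : Odd (2*n+1) := ⟨n, by ring⟩
    have heven : Even (2*n+1+1) := ⟨n+1, by ring⟩
    simp only [Function.comp]
    rw [hodd.neg_pow, heven.neg_pow]
    have d1 : ((2*n : ℕ) : ℝ) + 1 ≠ 0 := by positivity
    have d2 : ((2*n+1 : ℕ) : ℝ) + 1 ≠ 0 := by positivity
    field_simp
    push_cast
    ring
  rw [e1]
  convert H using 1
  · rfl
  simp only [Lam]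
  have l1 : Real.log (1 + u) = Real.log (1 + u) := rfl
  ring

lemma lam_bound {θ y : ℝ} (hθ0 : 0 < θ) (hθ1 : θ < 1) (h1 : 1 - θ ≤ y) (h2 : y ≤ 2) :
    |Lam y| ≤ 2 * (|Real.log (1-θ)| + Real.log 2) := by
  have hy0 : 0 < y := by linarith
  have hlog2 : (0:ℝ) ≤ Real.log 2 := Real.log_nonneg one_le_two
  have hl : |Real.log y| ≤ |Real.log (1-θ)| + Real.log 2 := by
    rw [abs_le]
    constructor
    · have ha := Real.log_le_log (by linarith : (0:ℝ) < 1 - θ) h1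
      have hb := neg_abs_le (Real.log (1-θ))
      linarith
    · have ha := Real.log_le_log hy0 h2
      have hb := abs_nonneg (Real.log (1-θ))
      linarith
  have he : |Lam y| = |y| * |Real.log y| := by rw [Lam, abs_mul]
  rw [he]
  have hy2 : |y| ≤ 2 := by rw [abs_le]; constructor <;> linarith
  exact mul_le_mul hy2 hl (abs_nonneg _) (by norm_num)

lemma integrable_bdd {α : Type*} [MeasurableSpace α] {ν : Measure α} [IsProbabilityMeasure ν]
    {f : α → ℝ} (hm : AEStronglyMeasurable f ν) {C : ℝ} (h : ∀ x, |f x| ≤ C) :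
    Integrable f ν :=
  (integrable_const C).mono' hm (ae_of_all _ (fun x => by simpa using h x))

lemma integral_tsum_bdd {α : Type*} [MeasurableSpace α] {ν : Measure α} [IsProbabilityMeasure ν]
    {F : ℕ → α → ℝ} (hm : ∀ n, AEStronglyMeasurable (F n) ν) {C : ℕ → ℝ}
    (h0 : ∀ n, 0 ≤ C n) (hb : ∀ n x, |F n x| ≤ C n) (hs : Summable C) :
    ∫ x, ∑' n, F n x ∂ν = ∑' n, ∫ x, F n x ∂ν := by
  refine integral_tsum hm ?_
  have hb' : ∀ n, ∫⁻ x, ‖F n x‖₊ ∂ν ≤ ENNReal.ofReal (C n) := by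
    intro n
    calc ∫⁻ x, ‖F n x‖₊ ∂ν ≤ ∫⁻ _, ENNReal.ofReal (C n) ∂ν := by
          refine lintegral_mono (fun x => ?_)
          rw [← enorm_eq_nnnorm, ← ofReal_norm]
          exact ENNReal.ofReal_le_ofReal (by simpa using hb n x)
      _ = ENNReal.ofReal (C n) := by rw [lintegral_const, measure_univ, mul_one]
  refine ne_top_of_le_ne_top ?_ (ENNReal.tsum_le_tsum hb')
  rw [← ENNReal.ofReal_tsum_of_nonneg h0 hs]
  exact ENNReal.ofReal_ne_top

lemma summable_coef {θ : ℝ} (hθ0 : 0 ≤ θ) (hθ1 : θ < 1) :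
    Summable (fun n : ℕ => θ^(2*n+2) / ((2*(n:ℝ)+1) * (2*(n:ℝ)+2))) := by
  refine Summable.of_nonneg_of_le (fun n => by positivity) (fun n => ?_)
    (((summable_geometric_of_lt_one (by positivity) (by nlinarith : θ^2 < 1))).mul_left (θ^2))
  have h1 : θ^(2*n+2) = θ^2 * (θ^2)^n := by rw [← pow_mul]; ring
  rw [← h1]
  refine div_le_self (by positivity) ?_
  nlinarith [Nat.cast_nonneg (α := ℝ) n]

lemma coef_nonneg {θ : ℝ} (hθ0 : 0 ≤ θ) (n : ℕ) :
    0 ≤ θ^(2*n+2) / ((2*(n:ℝ)+1) * (2*(n:ℝ)+2)) := by positivity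

lemma amgm : ∀ (k : ℕ) (a b : ℝ), 0 ≤ a → 0 ≤ b →
    (k:ℝ) * (a * b ^ (k-1)) ≤ a^k + ((k:ℝ)-1) * b^k := by
  intro k
  induction k with
  | zero => intro a b _ _; norm_num
  | succ k ih =>
    intro a b ha hb
    rcases Nat.eq_zero_or_pos k with hk0 | hkpos
    · subst hk0; simp
    · have ihb := mul_le_mul_of_nonneg_right (ih a b ha hb) hb
      have hbb : b ^ (k-1) * b = b ^ k := by
        rw [← pow_succ]; congr 1; omega
      have e : (k:ℝ)*(a*b^(k-1))*b = (k:ℝ)*(a*b^k) := by rw [← hbb]; ring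
      rw [e] at ihb
      have key : a * b^k + a^k * b ≤ a^(k+1) + b^(k+1) := by
        rcases le_total a b with hab | hab
        · have h1 : a^k ≤ b^k := pow_le_pow_left₀ ha hab k
          rw [pow_succ, pow_succ]
          nlinarith [mul_nonneg (sub_nonneg.2 hab) (sub_nonneg.2 h1)]
        · have h1 : b^k ≤ a^k := pow_le_pow_left₀ hb hab k
          rw [pow_succ, pow_succ]
          nlinarith [mul_nonneg (sub_nonneg.2 hab) (sub_nonneg.2 h1)]
      have ihb3 : (k:ℝ)*(a*b^k) ≤ a^k*b + ((k:ℝ)-1)*b^(k+1) := by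
        calc (k:ℝ)*(a*b^k) ≤ (a^k + ((k:ℝ)-1) * b^k) * b := ihb
          _ = a^k*b + ((k:ℝ)-1)*b^(k+1) := by rw [pow_succ]; ring
      have hg : ((k:ℕ):ℝ) + 1 = ((k+1 : ℕ) : ℝ) := by push_cast; ring
      push_cast
      nlinarith [ihb3, key]


lemma integral_g_eq {α : Type*} [MeasurableSpace α] {ν : Measure α} [IsProbabilityMeasure ν]
    {θ : ℝ} (hθ0 : 0 < θ) (hθ1 : θ < 1) {h : α → ℝ}
    (hm : Measurable h) (hb : ∀ x, |h x| ≤ 1) :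
    ∫ x, 2⁻¹ * (Lam (1 + θ * h x) + Lam (1 - θ * h x)) ∂ν
      = ∑' n : ℕ, θ^(2*n+2) / ((2*(n:ℝ)+1) * (2*(n:ℝ)+2)) * ∫ x, h x ^ (2*n+2) ∂ν := by
  have hpt : ∀ x, 2⁻¹ * (Lam (1 + θ * h x) + Lam (1 - θ * h x))
      = ∑' n : ℕ, θ^(2*n+2) / ((2*(n:ℝ)+1) * (2*(n:ℝ)+2)) * h x ^ (2*n+2) := by
    intro x
    have habs : |θ * h x| < 1 := by
      rw [abs_mul]
      calc |θ| * |h x| ≤ |θ| * 1 := mul_le_mul_of_nonneg_left (hb x) (abs_nonneg _)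
        _ < 1 := by rw [mul_one, abs_of_pos hθ0]; exact hθ1
    have H := hasSum_gfun habs
    have e : ∀ n : ℕ, (θ * h x) ^ (2*n+2) / ((2*(n:ℝ)+1) * (2*(n:ℝ)+2))
        = θ^(2*n+2) / ((2*(n:ℝ)+1) * (2*(n:ℝ)+2)) * h x ^ (2*n+2) := by
      intro n; rw [mul_pow]; ring
    calc 2⁻¹ * (Lam (1 + θ * h x) + Lam (1 - θ * h x))
        = ∑' n : ℕ, (θ * h x) ^ (2*n+2) / ((2*(n:ℝ)+1) * (2*(n:ℝ)+2)) := H.tsum_eq.symm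
      _ = _ := tsum_congr e
  rw [integral_congr_ae (ae_of_all _ hpt)]
  rw [integral_tsum_bdd (C := fun n => θ^(2*n+2) / ((2*(n:ℝ)+1) * (2*(n:ℝ)+2)))
    (fun n => ((hm.pow_const _).const_mul _).aestronglyMeasurable)
    (coef_nonneg hθ0.le)
    (fun n x => ?_) (summable_coef hθ0.le hθ1)]
  · exact tsum_congr (fun n => integral_const_mul _ _)
  · rw [abs_mul]
    have h1 : |h x ^ (2*n+2)| ≤ 1 := by
      rw [abs_pow]
      exact pow_le_one₀ (abs_nonneg _) (hb x)
    calc |θ^(2*n+2) / ((2*(n:ℝ)+1) * (2*(n:ℝ)+2))| * |h x ^ (2*n+2)|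
        ≤ |θ^(2*n+2) / ((2*(n:ℝ)+1) * (2*(n:ℝ)+2))| * 1 :=
          mul_le_mul_of_nonneg_left h1 (abs_nonneg _)
      _ = _ := by rw [mul_one, abs_of_nonneg (coef_nonneg hθ0.le n)]

lemma meas_eval (a : Bool) : Measurable fun μ : ProbVec Bool => μ.1 a := by
  have h1 : Measurable fun μ : ProbVec Bool => (μ.1 : Bool → ℝ) := measurable_subtype_coe
  exact (measurable_pi_apply a).comp h1

lemma meas_dfun : Measurable dfun := (meas_eval true).sub (meas_eval false)

lemma integral_prod_pow {k : ℕ} (π : Measure (ProbVec Bool)) [IsProbabilityMeasure π]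
    (m : ℕ) (t : Finset (Fin k)) :
    ∫ μs : Fin k → ProbVec Bool, ∏ i ∈ t, dfun (μs i) ^ m ∂(Measure.pi fun _ => π)
      = (∫ μ, dfun μ ^ m ∂π) ^ t.card := by
  letI : MeasureSpace (ProbVec Bool) := { volume := π }
  have hv : (Measure.pi fun _ : Fin k => π) = (volume : Measure (Fin k → ProbVec Bool)) :=
    (MeasureTheory.volume_pi).symm
  rw [hv]
  have e : (fun μs : Fin k → ProbVec Bool => ∏ i ∈ t, dfun (μs i) ^ m)
      = fun μs => ∏ i, (fun (i : Fin k) (x : ProbVec Bool) =>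
          if i ∈ t then dfun x ^ m else 1) i (μs i) := by
    funext μs
    rw [Finset.prod_ite_mem Finset.univ t (fun i => dfun (μs i) ^ m), Finset.univ_inter]
  rw [e, ← hv, MeasureTheory.integral_fintype_prod_eq_prod
    (f := fun (i : Fin k) (x : ProbVec Bool) => if i ∈ t then dfun x ^ m else 1)]
  have e2 : ∀ i : Fin k, (∫ x : ProbVec Bool, if i ∈ t then dfun x ^ m else 1)
      = if i ∈ t then (∫ μ, dfun μ ^ m ∂π) else 1 := by
    intro i
    by_cases hi : i ∈ t <;> simp only [hi, if_true, if_false]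
    · rfl
    · simp
  show ∏ i, (∫ x : ProbVec Bool, if i ∈ t then dfun x ^ m else 1) = _
  rw [Finset.prod_congr rfl (fun i _ => e2 i), Finset.prod_ite_mem Finset.univ t,
    Finset.univ_inter, Finset.prod_const]

lemma pos_key {k : ℕ} (hk : 0 < k) {η : ℝ} (hη0 : 0 < η) (hη2 : η < 1/2)
    (π π' : Measure (ProbVec Bool))
    [IsProbabilityMeasure π] [IsProbabilityMeasure π'] :
    0 ≤ ∑ s : Bool, (1/2 : ℝ) *
      ∫ μ : Fin k → ProbVec Bool, (∫ μ' : Fin k → ProbVec Bool,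
          (Lam (∑ τ : Fin k → Bool, ldgmW k η s τ * ∏ i, (μ i).1 (τ i))
          + ((k : ℝ) - 1) * Lam (∑ τ : Fin k → Bool, ldgmW k η s τ * ∏ i, (μ' i).1 (τ i))
          - (k : ℝ) * Lam (∑ τ : Fin k → Bool, ldgmW k η s τ *
              ((μ ⟨0, hk⟩).1 (τ ⟨0, hk⟩) *
                ∏ i ∈ Finset.univ.erase ⟨0, hk⟩, (μ' i).1 (τ i))))
        ∂(Measure.pi fun _ => π')) ∂(Measure.pi fun _ => π) := by
  classical
  set θ : ℝ := 1 - 2*η with hθdef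
  have hθ0 : 0 < θ := by rw [hθdef]; linarith
  have hθ1 : θ < 1 := by rw [hθdef]; linarith
  set z0 : Fin k := ⟨0, hk⟩ with hz0
  set P : Measure (Fin k → ProbVec Bool) := Measure.pi fun _ => π with hP
  set P' : Measure (Fin k → ProbVec Bool) := Measure.pi fun _ => π' with hP'
  haveI : IsProbabilityMeasure P := by rw [hP]; exact MeasureTheory.Measure.pi.instIsProbabilityMeasure _
  haveI : IsProbabilityMeasure P' := by rw [hP']; exact MeasureTheory.Measure.pi.instIsProbabilityMeasure _
  set X : (Fin k → ProbVec Bool) → ℝ := fun μ => ∏ i, dfun (μ i) with hX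
  set Zf : (Fin k → ProbVec Bool) → (Fin k → ProbVec Bool) → ℝ :=
    fun μ μ' => dfun (μ z0) * ∏ i ∈ Finset.univ.erase z0, dfun (μ' i) with hZf
  set G : Bool → ℝ → ℝ := fun s x => Lam (1 + sval s * θ * x) with hG
  set Cθ : ℝ := 2 * (|Real.log (1-θ)| + Real.log 2) with hCθ
  -- bounds
  have habs1 : ∀ μ : Fin k → ProbVec Bool, |X μ| ≤ 1 := by
    intro μ
    rw [hX, Finset.abs_prod]
    exact Finset.prod_le_one (fun i _ => abs_nonneg _) (fun i _ => abs_dfun_le _)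
  have habsZ : ∀ μ μ' : Fin k → ProbVec Bool, |Zf μ μ'| ≤ 1 := by
    intro μ μ'
    rw [hZf, abs_mul, Finset.abs_prod]
    have h2 : ∏ i ∈ Finset.univ.erase z0, |dfun (μ' i)| ≤ 1 :=
      Finset.prod_le_one (fun i _ => abs_nonneg _) (fun i _ => abs_dfun_le _)
    have h3 : (0:ℝ) ≤ ∏ i ∈ Finset.univ.erase z0, |dfun (μ' i)| :=
      Finset.prod_nonneg (fun i _ => abs_nonneg _)
    calc |dfun (μ z0)| * ∏ i ∈ Finset.univ.erase z0, |dfun (μ' i)|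
        ≤ 1 * 1 := mul_le_mul (abs_dfun_le _) h2 h3 zero_le_one
      _ = 1 := by ring
  have hXm : Measurable X :=
    Finset.measurable_prod _ (fun i _ => meas_dfun.comp (measurable_pi_apply i))
  have hZm2 : ∀ μ, Measurable (Zf μ) := fun μ =>
    (measurable_const.mul (Finset.measurable_prod _
      (fun i _ => meas_dfun.comp (measurable_pi_apply i))))
  have hZmJ : Measurable (fun p : (Fin k → ProbVec Bool) × (Fin k → ProbVec Bool) => Zf p.1 p.2) :=
    ((meas_dfun.comp ((measurable_pi_apply z0).comp measurable_fst)).mul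
      (Finset.measurable_prod _
        (fun i _ => meas_dfun.comp ((measurable_pi_apply i).comp measurable_snd))))
  have hGcont : ∀ s, Continuous (G s) := fun s =>
    Real.continuous_mul_log.comp (continuous_const.add (continuous_const.mul continuous_id))
  have hsval : ∀ s, |sval s| = 1 := by intro s; cases s <;> simp [sval]
  have hGb : ∀ s x, |x| ≤ 1 → |G s x| ≤ Cθ := by
    intro s x hx
    have hq : |sval s * θ * x| ≤ θ := by
      rw [abs_mul, abs_mul, hsval, one_mul, abs_of_pos hθ0]
      exact mul_le_of_le_one_right hθ0.le hx
    have hq1 := neg_abs_le (sval s * θ * x)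
    have hq2 := le_abs_self (sval s * θ * x)
    exact lam_bound hθ0 hθ1 (by linarith) (by linarith)
  -- rewriting of the three Lam arguments
  have hA : ∀ (s : Bool) (v : Fin k → ProbVec Bool),
      Lam (∑ τ : Fin k → Bool, ldgmW k η s τ * ∏ i, (v i).1 (τ i)) = G s (X v) := by
    intro s v
    rw [sum_eq, hG, hX]
  have upd_prod : ∀ (g : Fin k → ProbVec Bool → ℝ) (μ μ' : Fin k → ProbVec Bool),
      ∏ i, g i (Function.update μ' z0 (μ z0) i)
        = g z0 (μ z0) * ∏ i ∈ Finset.univ.erase z0, g i (μ' i) := by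
    intro g μ μ'
    have h2 : ∏ i ∈ Finset.univ.erase z0, g i (Function.update μ' z0 (μ z0) i)
        = ∏ i ∈ Finset.univ.erase z0, g i (μ' i) :=
      Finset.prod_congr rfl
        (fun i hi => by rw [Function.update_of_ne (Finset.ne_of_mem_erase hi)])
    rw [← Finset.mul_prod_erase Finset.univ _ (Finset.mem_univ z0), Function.update_self, h2]
  have hC : ∀ (s : Bool) (μ μ' : Fin k → ProbVec Bool),
      Lam (∑ τ : Fin k → Bool, ldgmW k η s τ *
          ((μ z0).1 (τ z0) * ∏ i ∈ Finset.univ.erase z0, (μ' i).1 (τ i)))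
        = G s (Zf μ μ') := by
    intro s μ μ'
    have e1 : ∀ τ : Fin k → Bool,
        (μ z0).1 (τ z0) * ∏ i ∈ Finset.univ.erase z0, (μ' i).1 (τ i)
          = ∏ i, (Function.update μ' z0 (μ z0) i).1 (τ i) := by
      intro τ
      rw [upd_prod (fun i x => x.1 (τ i)) μ μ']
    rw [Finset.sum_congr rfl (fun τ _ => by rw [e1 τ])]
    rw [sum_eq, hG, hZf, upd_prod (fun _ x => dfun x) μ μ']
  -- integrability
  have hIX : ∀ (s : Bool) (Q : Measure (Fin k → ProbVec Bool)), IsProbabilityMeasure Q →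
      Integrable (fun ρ => G s (X ρ)) Q := by
    intro s Q hQ
    haveI := hQ
    exact integrable_bdd ((hGcont s).measurable.comp hXm).aestronglyMeasurable
      (fun ρ => hGb s _ (habs1 ρ))
  have hIZ : ∀ (s : Bool) (μ : Fin k → ProbVec Bool),
      Integrable (fun μ' => G s (Zf μ μ')) P' := fun s μ =>
    integrable_bdd ((hGcont s).measurable.comp (hZm2 μ)).aestronglyMeasurable
      (fun μ' => hGb s _ (habsZ μ μ'))
  set IS : Bool → (Fin k → ProbVec Bool) → ℝ := fun s μ => ∫ μ', G s (Zf μ μ') ∂P' with hIS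
  have hISm : ∀ s, StronglyMeasurable (IS s) := by
    intro s
    have : Measurable (fun p : (Fin k → ProbVec Bool) × (Fin k → ProbVec Bool) =>
        G s (Zf p.1 p.2)) := (hGcont s).measurable.comp hZmJ
    exact this.stronglyMeasurable.integral_prod_right'
  have hISb : ∀ s μ, |IS s μ| ≤ Cθ := by
    intro s μ
    have h1 : ∀ᵐ μ' ∂P', ‖G s (Zf μ μ')‖ ≤ Cθ :=
      ae_of_all _ (fun μ' => by rw [Real.norm_eq_abs]; exact hGb s _ (habsZ μ μ'))
    have h2 := norm_integral_le_of_norm_le_const (μ := P') h1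
    rw [probReal_univ, mul_one] at h2
    rw [hIS]
    simpa using h2
  have hIIS : ∀ s, Integrable (IS s) P := fun s =>
    integrable_bdd (hISm s).aestronglyMeasurable (hISb s)
  -- rewrite the double integral
  have hEq : ∀ s : Bool,
      (∫ μ : Fin k → ProbVec Bool, (∫ μ' : Fin k → ProbVec Bool,
          (Lam (∑ τ : Fin k → Bool, ldgmW k η s τ * ∏ i, (μ i).1 (τ i))
          + ((k : ℝ) - 1) * Lam (∑ τ : Fin k → Bool, ldgmW k η s τ * ∏ i, (μ' i).1 (τ i))
          - (k : ℝ) * Lam (∑ τ : Fin k → Bool, ldgmW k η s τ *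
              ((μ z0).1 (τ z0) *
                ∏ i ∈ Finset.univ.erase z0, (μ' i).1 (τ i)))) ∂P') ∂P)
        = (∫ μ, G s (X μ) ∂P) + ((k:ℝ)-1) * (∫ μ', G s (X μ') ∂P')
            - (k:ℝ) * ∫ μ, IS s μ ∂P := by
    intro s
    have step1 : ∀ μ : Fin k → ProbVec Bool,
        (∫ μ' : Fin k → ProbVec Bool,
          (Lam (∑ τ : Fin k → Bool, ldgmW k η s τ * ∏ i, (μ i).1 (τ i))
          + ((k : ℝ) - 1) * Lam (∑ τ : Fin k → Bool, ldgmW k η s τ * ∏ i, (μ' i).1 (τ i))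
          - (k : ℝ) * Lam (∑ τ : Fin k → Bool, ldgmW k η s τ *
              ((μ z0).1 (τ z0) *
                ∏ i ∈ Finset.univ.erase z0, (μ' i).1 (τ i)))) ∂P')
          = G s (X μ) + ((k:ℝ)-1) * (∫ μ', G s (X μ') ∂P') - (k:ℝ) * IS s μ := by
      intro μ
      have e : ∀ μ' : Fin k → ProbVec Bool,
          (Lam (∑ τ : Fin k → Bool, ldgmW k η s τ * ∏ i, (μ i).1 (τ i))
          + ((k : ℝ) - 1) * Lam (∑ τ : Fin k → Bool, ldgmW k η s τ * ∏ i, (μ' i).1 (τ i))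
          - (k : ℝ) * Lam (∑ τ : Fin k → Bool, ldgmW k η s τ *
              ((μ z0).1 (τ z0) *
                ∏ i ∈ Finset.univ.erase z0, (μ' i).1 (τ i))))
            = G s (X μ) + ((k:ℝ)-1) * G s (X μ') - (k:ℝ) * G s (Zf μ μ') := by
        intro μ'
        rw [hA s μ, hA s μ', hC s μ μ']
      rw [integral_congr_ae (ae_of_all _ e)]
      have i1 : Integrable (fun μ' : Fin k → ProbVec Bool =>
          G s (X μ) + ((k:ℝ)-1) * G s (X μ')) P' :=
        (integrable_const _).add ((hIX s P' inferInstance).const_mul _)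
      have i2 : Integrable (fun μ' : Fin k → ProbVec Bool => (k:ℝ) * G s (Zf μ μ')) P' :=
        (hIZ s μ).const_mul _
      rw [integral_sub i1 i2,
          integral_add (integrable_const _) ((hIX s P' inferInstance).const_mul _),
          integral_const, integral_const_mul, integral_const_mul, probReal_univ,
          one_smul]
    rw [integral_congr_ae (ae_of_all _ step1)]
    have i3 : Integrable (fun μ : Fin k → ProbVec Bool =>
        G s (X μ) + ((k:ℝ)-1) * (∫ μ', G s (X μ') ∂P')) P :=
      (hIX s P inferInstance).add (integrable_const _)
    have i4 : Integrable (fun μ : Fin k → ProbVec Bool => (k:ℝ) * IS s μ) P :=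
      (hIIS s).const_mul _
    rw [integral_sub i3 i4,
        integral_add (hIX s P inferInstance) (integrable_const _),
        integral_const, integral_const_mul, probReal_univ, one_smul]
  -- combination identities
  have gsimp : ∀ x : ℝ, 2⁻¹ * (G true x + G false x)
      = 2⁻¹ * (Lam (1 + θ * x) + Lam (1 - θ * x)) := by
    intro x
    simp only [hG]
    rw [show (1 + sval true * θ * x) = 1 + θ * x by simp [sval],
        show (1 + sval false * θ * x) = 1 - θ * x by simp [sval]; ring]
  have hMfact : ∀ (ρ : Measure (ProbVec Bool)), IsProbabilityMeasure ρ → ∀ n : ℕ,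
      0 ≤ (∫ v, dfun v^(2*n+2) ∂ρ) ∧ (∫ v, dfun v^(2*n+2) ∂ρ) ≤ 1 := by
    intro ρ hρ n
    haveI := hρ
    have hpt0 : ∀ v, 0 ≤ dfun v^(2*n+2) := by
      intro v
      have e : dfun v^(2*n+2) = (dfun v^(n+1))^2 := by
        rw [← pow_mul]; congr 1; omega
      rw [e]; exact sq_nonneg _
    have hpt1 : ∀ v, dfun v^(2*n+2) ≤ 1 := by
      intro v
      calc dfun v^(2*n+2) ≤ |dfun v^(2*n+2)| := le_abs_self _
        _ = |dfun v|^(2*n+2) := abs_pow _ _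
        _ ≤ 1 := pow_le_one₀ (abs_nonneg _) (abs_dfun_le v)
    have hptb : ∀ v : ProbVec Bool, |dfun v^(2*n+2)| ≤ 1 := by
      intro v
      rw [abs_pow]; exact pow_le_one₀ (abs_nonneg _) (abs_dfun_le v)
    have hint : Integrable (fun v => dfun v^(2*n+2)) ρ :=
      integrable_bdd (meas_dfun.pow_const _).aestronglyMeasurable hptb
    refine ⟨integral_nonneg hpt0, ?_⟩
    calc (∫ v, dfun v^(2*n+2) ∂ρ) ≤ ∫ _, (1:ℝ) ∂ρ :=
        integral_mono hint (integrable_const 1) hpt1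
      _ = 1 := by simp
  have hMf := hMfact π inferInstance
  have hMf' := hMfact π' inferInstance
  have hcombX : ∀ (ρ : Measure (ProbVec Bool)) (hρ : IsProbabilityMeasure ρ),
      (1/2:ℝ) * (∫ μ : Fin k → ProbVec Bool, G true (X μ) ∂(Measure.pi fun _ => ρ))
        + (1/2:ℝ) * (∫ μ : Fin k → ProbVec Bool, G false (X μ) ∂(Measure.pi fun _ => ρ))
      = ∑' n : ℕ, θ^(2*n+2) / ((2*(n:ℝ)+1) * (2*(n:ℝ)+2)) * (∫ v, dfun v^(2*n+2) ∂ρ)^k := by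
    intro ρ hρ
    haveI := hρ
    haveI : IsProbabilityMeasure (Measure.pi fun _ : Fin k => ρ) :=
      MeasureTheory.Measure.pi.instIsProbabilityMeasure _
    have e0 : (1/2:ℝ) * (∫ μ, G true (X μ) ∂(Measure.pi fun _ : Fin k => ρ))
        + (1/2:ℝ) * (∫ μ, G false (X μ) ∂(Measure.pi fun _ : Fin k => ρ))
        = ∫ μ, 2⁻¹ * (G true (X μ) + G false (X μ)) ∂(Measure.pi fun _ : Fin k => ρ) := by
      rw [integral_const_mul, integral_add (hIX true _ inferInstance) (hIX false _ inferInstance)]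
      ring
    rw [e0, integral_congr_ae (ae_of_all _ (fun μ => gsimp (X μ))),
        integral_g_eq hθ0 hθ1 hXm habs1]
    refine tsum_congr (fun n => ?_)
    congr 1
    have e1 : ∀ μ : Fin k → ProbVec Bool, X μ ^ (2*n+2) = ∏ i, dfun (μ i)^(2*n+2) := by
      intro μ; rw [hX]; exact (Finset.prod_pow _ _ _).symm
    rw [integral_congr_ae (ae_of_all _ e1),
        integral_prod_pow ρ (2*n+2) Finset.univ, Finset.card_univ, Fintype.card_fin]
  have hc1 : (1/2:ℝ) * (∫ μ, G true (X μ) ∂P) + (1/2:ℝ) * (∫ μ, G false (X μ) ∂P)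
      = ∑' n : ℕ, θ^(2*n+2) / ((2*(n:ℝ)+1) * (2*(n:ℝ)+2)) * (∫ v, dfun v^(2*n+2) ∂π)^k := by
    rw [hP]; exact hcombX π inferInstance
  have hc2 : (1/2:ℝ) * (∫ μ', G true (X μ') ∂P') + (1/2:ℝ) * (∫ μ', G false (X μ') ∂P')
      = ∑' n : ℕ, θ^(2*n+2) / ((2*(n:ℝ)+1) * (2*(n:ℝ)+2)) * (∫ v, dfun v^(2*n+2) ∂π')^k := by
    rw [hP']; exact hcombX π' inferInstance
  have hX0 : ∀ m : ℕ, ∫ μ : Fin k → ProbVec Bool, dfun (μ z0)^m ∂P = ∫ v, dfun v^m ∂π := by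
    intro m
    have e1 : ∀ μ : Fin k → ProbVec Bool,
        dfun (μ z0)^m = ∏ i ∈ ({z0} : Finset (Fin k)), dfun (μ i)^m := by
      intro μ; rw [Finset.prod_singleton]
    rw [integral_congr_ae (ae_of_all _ e1), hP, integral_prod_pow π m {z0},
        Finset.card_singleton, pow_one]
  have hZint : ∀ (μ : Fin k → ProbVec Bool) (m : ℕ),
      ∫ μ', (Zf μ μ')^m ∂P' = dfun (μ z0)^m * (∫ v, dfun v^m ∂π')^(k-1) := by
    intro μ m
    have e1 : ∀ μ' : Fin k → ProbVec Bool, (Zf μ μ')^m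
        = dfun (μ z0)^m * ∏ i ∈ Finset.univ.erase z0, dfun (μ' i)^m := by
      intro μ'; rw [hZf]; rw [mul_pow, Finset.prod_pow]
    rw [integral_congr_ae (ae_of_all _ e1), integral_const_mul, hP',
        integral_prod_pow π' m _, Finset.card_erase_of_mem (Finset.mem_univ z0),
        Finset.card_univ, Fintype.card_fin]
  have hT3 : (1/2:ℝ) * (∫ μ, IS true μ ∂P) + (1/2:ℝ) * (∫ μ, IS false μ ∂P)
      = ∑' n : ℕ, θ^(2*n+2) / ((2*(n:ℝ)+1) * (2*(n:ℝ)+2)) *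
          ((∫ v, dfun v^(2*n+2) ∂π) * (∫ v, dfun v^(2*n+2) ∂π')^(k-1)) := by
    have e0 : (1/2:ℝ) * (∫ μ, IS true μ ∂P) + (1/2:ℝ) * (∫ μ, IS false μ ∂P)
        = ∫ μ, 2⁻¹ * (IS true μ + IS false μ) ∂P := by
      rw [integral_const_mul, integral_add (hIIS true) (hIIS false)]; ring
    have ptw : ∀ μ : Fin k → ProbVec Bool, 2⁻¹ * (IS true μ + IS false μ)
        = ∑' n : ℕ, (θ^(2*n+2) / ((2*(n:ℝ)+1) * (2*(n:ℝ)+2))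
            * (∫ v, dfun v^(2*n+2) ∂π')^(k-1)) * dfun (μ z0)^(2*n+2) := by
      intro μ
      have h1 : 2⁻¹ * ((∫ μ', G true (Zf μ μ') ∂P') + ∫ μ', G false (Zf μ μ') ∂P')
          = ∫ μ', 2⁻¹ * (G true (Zf μ μ') + G false (Zf μ μ')) ∂P' := by
        rw [integral_const_mul, integral_add (hIZ true μ) (hIZ false μ)]
      calc 2⁻¹ * (IS true μ + IS false μ)
          = 2⁻¹ * ((∫ μ', G true (Zf μ μ') ∂P') + ∫ μ', G false (Zf μ μ') ∂P') := rfl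
        _ = ∫ μ', 2⁻¹ * (G true (Zf μ μ') + G false (Zf μ μ')) ∂P' := h1
        _ = ∫ μ', 2⁻¹ * (Lam (1 + θ * Zf μ μ') + Lam (1 - θ * Zf μ μ')) ∂P' :=
            integral_congr_ae (ae_of_all _ (fun μ' => gsimp (Zf μ μ')))
        _ = ∑' n : ℕ, θ^(2*n+2) / ((2*(n:ℝ)+1) * (2*(n:ℝ)+2))
              * ∫ μ', (Zf μ μ')^(2*n+2) ∂P' :=
            integral_g_eq hθ0 hθ1 (hZm2 μ) (habsZ μ)
        _ = _ := by
            refine tsum_congr (fun n => ?_)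
            rw [hZint μ (2*n+2)]
            ring
    rw [e0, integral_congr_ae (ae_of_all _ ptw)]
    rw [integral_tsum_bdd
      (F := fun (n : ℕ) (μ : Fin k → ProbVec Bool) =>
        (θ^(2*n+2) / ((2*(n:ℝ)+1) * (2*(n:ℝ)+2))
          * (∫ v, dfun v^(2*n+2) ∂π')^(k-1)) * dfun (μ z0)^(2*n+2))
      (C := fun n : ℕ => θ^(2*n+2) / ((2*(n:ℝ)+1) * (2*(n:ℝ)+2)))
      (fun n => (((meas_dfun.comp (measurable_pi_apply z0)).pow_const _).const_mul
        _).aestronglyMeasurable)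
      (coef_nonneg hθ0.le)
      (fun n μ => ?_) (summable_coef hθ0.le hθ1)]
    · refine tsum_congr (fun n => ?_)
      rw [integral_const_mul, hX0 (2*n+2)]
      ring
    · rw [abs_mul, abs_mul]
      have b1 : |θ^(2*n+2) / ((2*(n:ℝ)+1) * (2*(n:ℝ)+2))|
          = θ^(2*n+2) / ((2*(n:ℝ)+1) * (2*(n:ℝ)+2)) := abs_of_nonneg (coef_nonneg hθ0.le n)
      have b2 : |(∫ v, dfun v^(2*n+2) ∂π')^(k-1)| ≤ 1 := by
        rw [abs_pow]
        refine pow_le_one₀ (abs_nonneg _) ?_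
        rw [abs_of_nonneg (hMf' n).1]; exact (hMf' n).2
      have b3 : |dfun (μ z0)^(2*n+2)| ≤ 1 := by
        rw [abs_pow]; exact pow_le_one₀ (abs_nonneg _) (abs_dfun_le _)
      calc |θ^(2*n+2) / ((2*(n:ℝ)+1) * (2*(n:ℝ)+2))|
            * |(∫ v, dfun v^(2*n+2) ∂π')^(k-1)| * |dfun (μ z0)^(2*n+2)|
          ≤ |θ^(2*n+2) / ((2*(n:ℝ)+1) * (2*(n:ℝ)+2))| * 1 * 1 := by
            refine mul_le_mul (mul_le_mul le_rfl b2 (abs_nonneg _) (abs_nonneg _)) b3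
              (abs_nonneg _) ?_
            positivity
        _ = θ^(2*n+2) / ((2*(n:ℝ)+1) * (2*(n:ℝ)+2)) := by rw [b1]; ring
  -- final assembly
  simp only [Fintype.sum_bool]
  rw [hEq true, hEq false]
  have hring : ∀ t1t t1f t2t t2f t3t t3f : ℝ,
      (1/2:ℝ) * (t1t + ((k:ℝ)-1) * t2t - (k:ℝ)*t3t)
        + (1/2) * (t1f + ((k:ℝ)-1)*t2f - (k:ℝ)*t3f)
      = ((1/2:ℝ)*t1t + (1/2)*t1f) + ((k:ℝ)-1) * ((1/2:ℝ)*t2t + (1/2)*t2f)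
          - (k:ℝ)*((1/2:ℝ)*t3t + (1/2)*t3f) := by
    intros; ring
  rw [hring, hc1, hc2, hT3]
  have hsum1 : Summable (fun n : ℕ => θ^(2*n+2) / ((2*(n:ℝ)+1) * (2*(n:ℝ)+2))
      * (∫ v, dfun v^(2*n+2) ∂π)^k) := by
    refine Summable.of_nonneg_of_le
      (fun n => mul_nonneg (coef_nonneg hθ0.le n) (pow_nonneg (hMf n).1 k))
      (fun n => ?_) (summable_coef hθ0.le hθ1)
    exact mul_le_of_le_one_right (coef_nonneg hθ0.le n)
      (pow_le_one₀ (hMf n).1 (hMf n).2)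
  have hsum2 : Summable (fun n : ℕ => θ^(2*n+2) / ((2*(n:ℝ)+1) * (2*(n:ℝ)+2))
      * (∫ v, dfun v^(2*n+2) ∂π')^k) := by
    refine Summable.of_nonneg_of_le
      (fun n => mul_nonneg (coef_nonneg hθ0.le n) (pow_nonneg (hMf' n).1 k))
      (fun n => ?_) (summable_coef hθ0.le hθ1)
    exact mul_le_of_le_one_right (coef_nonneg hθ0.le n)
      (pow_le_one₀ (hMf' n).1 (hMf' n).2)
  have hsum3 : Summable (fun n : ℕ => θ^(2*n+2) / ((2*(n:ℝ)+1) * (2*(n:ℝ)+2))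
      * ((∫ v, dfun v^(2*n+2) ∂π) * (∫ v, dfun v^(2*n+2) ∂π')^(k-1))) := by
    refine Summable.of_nonneg_of_le
      (fun n => mul_nonneg (coef_nonneg hθ0.le n)
        (mul_nonneg (hMf n).1 (pow_nonneg (hMf' n).1 _)))
      (fun n => ?_) (summable_coef hθ0.le hθ1)
    refine mul_le_of_le_one_right (coef_nonneg hθ0.le n) ?_
    have h1 := (hMf n).1
    have h2 := (hMf n).2
    have h3 := pow_nonneg (hMf' n).1 (k-1)
    have h4 := pow_le_one₀ (hMf' n).1 (hMf' n).2 (n := k-1)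
    nlinarith
  have key : (∑' n : ℕ, θ^(2*n+2) / ((2*(n:ℝ)+1) * (2*(n:ℝ)+2)) * (∫ v, dfun v^(2*n+2) ∂π)^k)
      + ((k:ℝ)-1) * (∑' n : ℕ, θ^(2*n+2) / ((2*(n:ℝ)+1) * (2*(n:ℝ)+2))
          * (∫ v, dfun v^(2*n+2) ∂π')^k)
      - (k:ℝ) * (∑' n : ℕ, θ^(2*n+2) / ((2*(n:ℝ)+1) * (2*(n:ℝ)+2)) *
          ((∫ v, dfun v^(2*n+2) ∂π) * (∫ v, dfun v^(2*n+2) ∂π')^(k-1)))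
      = ∑' n : ℕ, (θ^(2*n+2) / ((2*(n:ℝ)+1) * (2*(n:ℝ)+2)) * (∫ v, dfun v^(2*n+2) ∂π)^k
          + ((k:ℝ)-1) * (θ^(2*n+2) / ((2*(n:ℝ)+1) * (2*(n:ℝ)+2))
              * (∫ v, dfun v^(2*n+2) ∂π')^k)
          - (k:ℝ) * (θ^(2*n+2) / ((2*(n:ℝ)+1) * (2*(n:ℝ)+2)) *
              ((∫ v, dfun v^(2*n+2) ∂π) * (∫ v, dfun v^(2*n+2) ∂π')^(k-1)))) := by
    rw [← tsum_mul_left, ← tsum_mul_left,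
        ← Summable.tsum_add hsum1 (hsum2.mul_left _),
        ← Summable.tsum_sub (hsum1.add (hsum2.mul_left _)) (hsum3.mul_left _)]
  rw [key]
  refine tsum_nonneg (fun n => ?_)
  have hamgm := amgm k (∫ v, dfun v^(2*n+2) ∂π) (∫ v, dfun v^(2*n+2) ∂π') (hMf n).1 (hMf' n).1
  have hcn := coef_nonneg hθ0.le n
  nlinarith [mul_nonneg hcn (sub_nonneg.2 hamgm)]

end Aux
end TS

open TS in
/-- **LDGM codes satisfy SYM and POS.** For `Ω={±1}`, `Ψ={ψ_1,ψ_{−1}}` with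
`ψ_s(σ)=1+s(1−2η)∏σ_i` and uniform prior `p`, one has (i) `E[ψ(σ)]=1` for all `σ` (so SYM
holds with `ξ=1`), and (ii) POS holds. -/
theorem ldgm_sym_and_pos (k : ℕ) (hk : 1 ≤ k) (η : ℝ) (hη : η ∈ Set.Ioo (0 : ℝ) (1 / 2)) :
    (∀ τ : Fin k → Bool, ∑ s : Bool, (1 / 2 : ℝ) * TS.ldgmW k η s τ = 1) ∧
      TS.xi k (TS.ldgmW k η) (fun _ => (1 / 2 : ℝ)) = 1 ∧
      TS.SYM k (TS.ldgmW k η) (fun _ => (1 / 2 : ℝ)) ∧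
      TS.POS k hk (TS.ldgmW k η) (fun _ => (1 / 2 : ℝ)) := by
  obtain ⟨hη0, hη2⟩ := hη
  have part1 : ∀ τ : Fin k → Bool, ∑ s : Bool, (1 / 2 : ℝ) * TS.ldgmW k η s τ = 1 := by
    intro τ
    rw [Fintype.sum_bool]
    simp only [TS.ldgmW, TS.sval]
    norm_num
    ring
  have hxi : TS.xi k (TS.ldgmW k η) (fun _ => (1 / 2 : ℝ)) = 1 := by
    unfold TS.xi
    have h1 : ∀ τ : Fin k → Bool, (∑ s : Bool, (fun _ : Bool => (1/2:ℝ)) s * TS.ldgmW k η s τ) = 1 := by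
      intro τ; simpa using part1 τ
    rw [Finset.sum_congr rfl (fun τ _ => h1 τ), Finset.sum_const, Finset.card_univ]
    simp [Fintype.card_fun]
  refine ⟨part1, hxi, ?_, ?_⟩
  · intro τ
    rw [hxi]
    simpa using part1 τ
  · intro π π' hπ hπ'
    haveI := hπ.1
    haveI := hπ'.1
    exact TS.Aux.pos_key (k := k) hk hη0 hη2 π π'
end
end

section
/- For any finite set Ω, any ε>0 there is T=T(ε,Ω)>0 such that for every n>T and every probability measure μ on Ω^n the following holds. Draw σ̌ from μ, draw θ uniform on (0,T), and obtain a random set U⊆[n] by including each i∈[n] independently with probability θ/n; define the conditioned measure μ̌(σ) = μ(σ)·1{σ_i=σ̌_i for all i∈U} / μ({τ: τ_i=σ̌_i for all i∈U}). Then with probability at least 1−ε, μ̌ is ε-symmetric, i.e. (1/n²)∑_{x_1,x_2∈[n]} ‖μ̌_{x_1,x_2} − μ̌_{x_1}⊗μ̌_{x_2}‖_TV < ε, where μ̌_{x_1,x_2} and μ̌_x denote the joint and single-coordinate marginals of μ̌. -/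
open MeasureTheory
open scoped BigOperators Classical

noncomputable section

namespace Pinning

variable {Ω : Type*} [Fintype Ω]

/-- the measure `μ̌` obtained from `μ` by conditioning the coordinates in `U` to agree
with `σc`. -/
def condMass (n : ℕ) (μ : (Fin n → Ω) → ℝ) (U : Finset (Fin n)) (σc : Fin n → Ω)
    (σ : Fin n → Ω) : ℝ :=
  (if ∀ i ∈ U, σ i = σc i then μ σ else 0) /
    ∑ τ : Fin n → Ω, if ∀ i ∈ U, τ i = σc i then μ τ else 0

/-- single-coordinate marginal of a mass function on `Ω^n`. -/
def marg1 (n : ℕ) (ν : (Fin n → Ω) → ℝ) (x : Fin n) (a : Ω) : ℝ :=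
  ∑ σ : Fin n → Ω, if σ x = a then ν σ else 0

/-- two-coordinate marginal of a mass function on `Ω^n`. -/
def marg2 (n : ℕ) (ν : (Fin n → Ω) → ℝ) (x₁ x₂ : Fin n) (a b : Ω) : ℝ :=
  ∑ σ : Fin n → Ω, if σ x₁ = a ∧ σ x₂ = b then ν σ else 0

/-- `ν` is `ε`-symmetric: `(1/n²) ∑_{x₁,x₂} ‖ν_{x₁,x₂} − ν_{x₁}⊗ν_{x₂}‖_TV < ε`,
where `‖f−g‖_TV = ∑ (f−g)₊`. -/
def epsSym (n : ℕ) (ν : (Fin n → Ω) → ℝ) (ε : ℝ) : Prop :=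
  ((n : ℝ) ^ 2)⁻¹ * ∑ x₁ : Fin n, ∑ x₂ : Fin n,
      (∑ a : Ω, ∑ b : Ω,
        max (marg2 n ν x₁ x₂ a b - marg1 n ν x₁ a * marg1 n ν x₂ b) 0) < ε

end Pinning

open Finset

namespace PP
open Pinning

variable {Ω : Type*} [Fintype Ω] {n : ℕ}

/-- partition function -/
def Zf (μ : (Fin n → Ω) → ℝ) (U : Finset (Fin n)) (σc : Fin n → Ω) : ℝ :=
  ∑ τ : Fin n → Ω, if ∀ i ∈ U, τ i = σc i then μ τ else 0

def N1 (μ : (Fin n → Ω) → ℝ) (U : Finset (Fin n)) (σc : Fin n → Ω) (y : Fin n) (b : Ω) : ℝ :=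
  ∑ σ : Fin n → Ω, if σ y = b ∧ ∀ i ∈ U, σ i = σc i then μ σ else 0

def N2 (μ : (Fin n → Ω) → ℝ) (U : Finset (Fin n)) (σc : Fin n → Ω) (x y : Fin n) (a b : Ω) : ℝ :=
  ∑ σ : Fin n → Ω, if (σ x = a ∧ σ y = b) ∧ ∀ i ∈ U, σ i = σc i then μ σ else 0

variable {μ : (Fin n → Ω) → ℝ} {U : Finset (Fin n)} {σc : Fin n → Ω}

lemma condMass_def (σ : Fin n → Ω) :
    condMass n μ U σc σ = (if ∀ i ∈ U, σ i = σc i then μ σ else 0) / Zf μ U σc := rfl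

lemma ite_div (P : Prop) [Decidable P] (x z : ℝ) :
    (if P then x else 0) / z = if P then x / z else 0 := by
  split_ifs <;> simp

lemma marg1_cond (y : Fin n) (b : Ω) :
    marg1 n (condMass n μ U σc) y b = N1 μ U σc y b / Zf μ U σc := by
  rw [marg1, N1, Finset.sum_div]
  refine Finset.sum_congr rfl fun σ _ => ?_
  rw [condMass_def, ite_div, ite_div, ← ite_and]

lemma marg2_cond (x y : Fin n) (a b : Ω) :
    marg2 n (condMass n μ U σc) x y a b = N2 μ U σc x y a b / Zf μ U σc := by
  rw [marg2, N2, Finset.sum_div]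
  refine Finset.sum_congr rfl fun σ _ => ?_
  rw [condMass_def, ite_div, ite_div, ← ite_and]

section nonneg
variable (h0 : ∀ σ, 0 ≤ μ σ)
include h0

lemma Zf_nonneg : 0 ≤ Zf μ U σc :=
  Finset.sum_nonneg fun τ _ => by split_ifs; exacts [h0 τ, le_rfl]

lemma mu_le_Zf : μ σc ≤ Zf μ U σc := by
  have h := Finset.single_le_sum (f := fun τ => if ∀ i ∈ U, τ i = σc i then μ τ else 0)
    (fun τ _ => by split_ifs; exacts [h0 τ, le_rfl]) (Finset.mem_univ σc)
  simpa [Zf] using h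

lemma N1_nonneg {y b} : 0 ≤ N1 μ U σc y b :=
  Finset.sum_nonneg fun τ _ => by split_ifs; exacts [h0 τ, le_rfl]

lemma N2_nonneg {x y a b} : 0 ≤ N2 μ U σc x y a b :=
  Finset.sum_nonneg fun τ _ => by split_ifs; exacts [h0 τ, le_rfl]

lemma N2_le_N1 {x y a b} : N2 μ U σc x y a b ≤ N1 μ U σc y b := by
  refine Finset.sum_le_sum fun σ _ => ?_
  split_ifs with h1 h2
  · exact le_rfl
  · exact absurd ⟨h1.1.2, h1.2⟩ h2
  · exact h0 σ
  · exact le_rfl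

lemma condMass_nonneg (σ) : 0 ≤ condMass n μ U σc σ := by
  rw [condMass_def]
  refine div_nonneg ?_ (Zf_nonneg h0)
  split_ifs; exacts [h0 σ, le_rfl]

lemma marg1_nonneg {y b} : 0 ≤ marg1 n (condMass n μ U σc) y b := by
  rw [marg1_cond]; exact div_nonneg (N1_nonneg h0) (Zf_nonneg h0)

end nonneg

lemma sum_condMass : ∑ σ : Fin n → Ω, condMass n μ U σc σ = Zf μ U σc / Zf μ U σc := by
  simp only [condMass_def]
  rw [← Finset.sum_div]; rfl

lemma sum_condMass_le_one : ∑ σ : Fin n → Ω, condMass n μ U σc σ ≤ 1 := by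
  rw [sum_condMass]
  rcases eq_or_ne (Zf μ U σc) 0 with h | h
  · simp [h]
  · rw [div_self h]

lemma sum_marg1_q {y : Fin n} : ∑ b : Ω, marg1 n (condMass n μ U σc) y b
    = ∑ σ : Fin n → Ω, condMass n μ U σc σ := by
  simp only [marg1]
  rw [Finset.sum_comm]
  refine Finset.sum_congr rfl fun σ _ => ?_
  simp

lemma sum_marg1_q_eq_one {y : Fin n} (hZ : Zf μ U σc ≠ 0) :
    ∑ b : Ω, marg1 n (condMass n μ U σc) y b = 1 := by
  rw [sum_marg1_q, sum_condMass, div_self hZ]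

lemma sum_marg2_b {x y : Fin n} {a : Ω} (ν : (Fin n → Ω) → ℝ) :
    ∑ b : Ω, marg2 n ν x y a b = marg1 n ν x a := by
  simp only [marg2, marg1]
  rw [Finset.sum_comm]
  refine Finset.sum_congr rfl fun σ _ => ?_
  rcases eq_or_ne (σ x) a with h | h
  · simp [h]
  · simp [h]

end PP

namespace PP
open Pinning
variable {Ω : Type*} [Fintype Ω] {n : ℕ} {μ : (Fin n → Ω) → ℝ} {U : Finset (Fin n)} {σc : Fin n → Ω}

/-- Key product formula: `q_b · m_{ab} = r_{ab}`. -/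
lemma marg_product (h0 : ∀ σ, 0 ≤ μ σ) (U : Finset (Fin n)) (σc : Fin n → Ω)
    (x y : Fin n) (a b : Ω) :
    marg1 n (condMass n μ U σc) y b *
      marg1 n (condMass n μ (insert y U) (Function.update σc y b)) x a
    = marg2 n (condMass n μ U σc) x y a b := by
  rw [marg1_cond, marg1_cond, marg2_cond]
  by_cases hy : y ∈ U
  · rw [Finset.insert_eq_self.mpr hy]
    by_cases hb : b = σc y
    · subst hb
      rw [Function.update_eq_self]
      have hA : N1 μ U σc y (σc y) = Zf μ U σc := by
        refine Finset.sum_congr rfl fun τ _ => ?_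
        refine if_congr ⟨fun h => h.2, fun h => ⟨h y hy, h⟩⟩ rfl rfl
      have hBC : N1 μ U σc x a = N2 μ U σc x y a (σc y) := by
        refine Finset.sum_congr rfl fun τ _ => ?_
        refine if_congr ⟨fun h => ⟨⟨h.1, h.2 y hy⟩, h.2⟩, fun h => ⟨h.1.1, h.2⟩⟩ rfl rfl
      rw [hA, hBC]
      rcases eq_or_ne (Zf μ U σc) 0 with h | h
      · simp [h]
      · rw [div_self h, one_mul]
    · have hA : N1 μ U σc y b = 0 := by
        refine Finset.sum_eq_zero fun τ _ => ?_
        rw [if_neg]; rintro ⟨h1, h2⟩; exact hb ((h1.symm.trans (h2 y hy)))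
      have hC : N2 μ U σc x y a b = 0 := by
        refine Finset.sum_eq_zero fun τ _ => ?_
        rw [if_neg]; rintro ⟨⟨_, h1⟩, h2⟩; exact hb ((h1.symm.trans (h2 y hy)))
      rw [hA, hC]; simp
  · -- y ∉ U
    have hiff : ∀ τ : Fin n → Ω,
        (∀ i ∈ insert y U, τ i = Function.update σc y b i) ↔
          (τ y = b ∧ ∀ i ∈ U, τ i = σc i) := by
      intro τ
      rw [Finset.forall_mem_insert, Function.update_self]
      constructor
      · rintro ⟨h1, h2⟩
        exact ⟨h1, fun i hi => (h2 i hi).trans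
          (Function.update_of_ne (fun he : i = y => hy (by rwa [he] at hi)) _ _)⟩
      · rintro ⟨h1, h2⟩
        exact ⟨h1, fun i hi => (h2 i hi).trans
          (Function.update_of_ne (fun he : i = y => hy (by rwa [he] at hi)) _ _).symm⟩
    have hZ' : Zf μ (insert y U) (Function.update σc y b) = N1 μ U σc y b := by
      refine Finset.sum_congr rfl fun τ _ => if_congr (hiff τ) rfl rfl
    have hBC : N1 μ (insert y U) (Function.update σc y b) x a = N2 μ U σc x y a b := by
      refine Finset.sum_congr rfl fun τ _ => ?_
      refine if_congr ?_ rfl rfl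
      rw [hiff τ]; tauto
    rw [hZ', hBC]
    by_cases hA : N1 μ U σc y b = 0
    · have hC : N2 μ U σc x y a b = 0 :=
        le_antisymm (hA ▸ N2_le_N1 h0) (N2_nonneg h0)
      rw [hA, hC, zero_div, zero_div, mul_zero]
    · rw [div_mul_div_comm, mul_comm (Zf μ U σc) (N1 μ U σc y b),
        mul_div_mul_left _ _ hA]

end PP

namespace PP2
open Pinning PP
variable {Ω : Type*} [Fintype Ω] {n : ℕ} {μ : (Fin n → Ω) → ℝ}

lemma Zf_local {V : Finset (Fin n)} {σ τ : Fin n → Ω} (h : ∀ i ∈ V, σ i = τ i) :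
    Zf μ V σ = Zf μ V τ :=
  Finset.sum_congr rfl fun ρ _ => if_congr
    ⟨fun hρ i hi => (hρ i hi).trans (h i hi), fun hρ i hi => (hρ i hi).trans (h i hi).symm⟩ rfl rfl

lemma pull_local (h0 : ∀ σ, 0 ≤ μ σ) (V : Finset (Fin n)) (y : Fin n) (b : Ω)
    (F : (Fin n → Ω) → ℝ) (hF : ∀ σ τ, (∀ i ∈ V, σ i = τ i) → F σ = F τ) :
    ∑ σ : Fin n → Ω, μ σ * ((if σ y = b then 1 else 0) * F σ)
    = ∑ σ : Fin n → Ω, μ σ * (marg1 n (condMass n μ V σ) y b * F σ) := by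
  have key : ∀ σ : Fin n → Ω, μ σ * (marg1 n (condMass n μ V σ) y b * F σ)
      = ∑ τ : Fin n → Ω,
          (if τ y = b ∧ ∀ i ∈ V, τ i = σ i then μ σ * (μ τ * F σ / Zf μ V σ) else 0) := by
    intro σ
    rw [marg1_cond, N1, Finset.sum_div, Finset.sum_mul, Finset.mul_sum]
    refine Finset.sum_congr rfl fun τ _ => ?_
    split_ifs with h
    · ring
    · simp
  rw [Finset.sum_congr rfl fun σ _ => key σ, Finset.sum_comm]
  refine Finset.sum_congr rfl fun τ _ => ?_
  -- inner sum over σ equals `μ τ * (ite (τ y = b) 1 0 * F τ)`, proved right-to-left here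
  have step1 : ∀ σ : Fin n → Ω,
      (if τ y = b ∧ ∀ i ∈ V, τ i = σ i then μ σ * (μ τ * F σ / Zf μ V σ) else 0)
      = (μ τ * F τ / Zf μ V τ) * (if τ y = b ∧ ∀ i ∈ V, τ i = σ i then μ σ else 0) := by
    intro σ
    split_ifs with h
    · have hagree : ∀ i ∈ V, σ i = τ i := fun i hi => (h.2 i hi).symm
      rw [hF σ τ hagree, Zf_local (μ := μ) hagree]; ring
    · simp
  rw [Finset.sum_congr rfl fun σ _ => step1 σ, ← Finset.mul_sum]
  have step2 : ∑ σ : Fin n → Ω, (if τ y = b ∧ ∀ i ∈ V, τ i = σ i then μ σ else 0)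
      = if τ y = b then Zf μ V τ else 0 := by
    split_ifs with h
    · rw [Zf]
      refine Finset.sum_congr rfl fun σ _ => if_congr ?_ rfl rfl
      constructor
      · rintro ⟨-, h2⟩ i hi; exact (h2 i hi).symm
      · intro h2; exact ⟨h, fun i hi => (h2 i hi).symm⟩
    · refine Finset.sum_eq_zero fun σ _ => if_neg ?_
      rintro ⟨h1, -⟩; exact h h1
  rw [step2]
  split_ifs with h
  · rcases eq_or_ne (Zf μ V τ) 0 with hZ | hZ
    · have : μ τ = 0 := le_antisymm (hZ ▸ mu_le_Zf h0) (h0 τ)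
      simp [this]
    · rw [div_mul_cancel₀ _ hZ]; ring
  · simp

end PP2

namespace PP3
open Pinning PP PP2
variable {Ω : Type*} [Fintype Ω] {n : ℕ} {μ : (Fin n → Ω) → ℝ}

/-- Tower property: pinning one more uniformly-weighted coordinate. -/
lemma tower (h0 : ∀ σ, 0 ≤ μ σ) (V : Finset (Fin n)) (y : Fin n) (hy : y ∉ V)
    (h : (Fin n → Ω) → ℝ)
    (hh : ∀ σ τ, (∀ i ∈ insert y V, σ i = τ i) → h σ = h τ) :
    ∑ σ : Fin n → Ω, μ σ * h σ
    = ∑ σ : Fin n → Ω, μ σ *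
        ∑ b : Ω, marg1 n (condMass n μ V σ) y b * h (Function.update σ y b) := by
  have lhs : ∀ σ : Fin n → Ω, μ σ * h σ
      = ∑ b : Ω, μ σ * ((if σ y = b then 1 else 0) * h (Function.update σ y b)) := by
    intro σ
    rw [Finset.sum_eq_single (σ y)]
    · rw [if_pos rfl, Function.update_eq_self, one_mul]
    · intro b _ hb
      rw [if_neg (fun he => hb he.symm), zero_mul, mul_zero]
    · intro hmem; exact absurd (Finset.mem_univ _) hmem
  rw [Finset.sum_congr rfl fun σ _ => lhs σ, Finset.sum_comm]
  have hswap : ∀ b : Ω,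
      ∑ σ : Fin n → Ω, μ σ * ((if σ y = b then 1 else 0) * h (Function.update σ y b))
      = ∑ σ : Fin n → Ω, μ σ * (marg1 n (condMass n μ V σ) y b * h (Function.update σ y b)) := by
    intro b
    refine pull_local h0 V y b _ fun σ τ hagree => ?_
    refine hh _ _ fun i hi => ?_
    rcases Finset.mem_insert.mp hi with rfl | hiV
    · rw [Function.update_self, Function.update_self]
    · have hne : i ≠ y := fun he => hy (he ▸ hiV)
      rw [Function.update_of_ne hne, Function.update_of_ne hne]
      exact hagree i hiV
  rw [Finset.sum_congr rfl fun b _ => hswap b, Finset.sum_comm]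
  exact Finset.sum_congr rfl fun σ _ => by rw [Finset.mul_sum]

end PP3

namespace PP4
open Pinning PP PP2 PP3
variable {Ω : Type*} [Fintype Ω] {n : ℕ} {μ : (Fin n → Ω) → ℝ}

/-- the ℓ²-potential -/
def phi (μ : (Fin n → Ω) → ℝ) (U : Finset (Fin n)) (σc : Fin n → Ω) : ℝ :=
  ∑ x : Fin n, ∑ a : Ω, (marg1 n (condMass n μ U σc) x a) ^ 2

/-- the ℓ²-decrement at a pair of coordinates -/
def Dxy (μ : (Fin n → Ω) → ℝ) (U : Finset (Fin n)) (σc : Fin n → Ω) (x y : Fin n) : ℝ :=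
  ∑ b : Ω, ∑ a : Ω,
    marg1 n (condMass n μ U σc) y b *
      (marg1 n (condMass n μ (insert y U) (Function.update σc y b)) x a
        - marg1 n (condMass n μ U σc) x a) ^ 2

def psi (μ : (Fin n → Ω) → ℝ) (y : Fin n) (V : Finset (Fin n)) (σc : Fin n → Ω) : ℝ :=
  ∑ x : Fin n, Dxy μ V σc x y

lemma Dxy_nonneg (h0 : ∀ σ, 0 ≤ μ σ) {U σc x y} : 0 ≤ Dxy μ U σc x y :=
  Finset.sum_nonneg fun b _ => Finset.sum_nonneg fun a _ =>
    mul_nonneg (marg1_nonneg h0) (sq_nonneg _)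

lemma psi_nonneg (h0 : ∀ σ, 0 ≤ μ σ) {y V σc} : 0 ≤ psi μ y V σc :=
  Finset.sum_nonneg fun x _ => Dxy_nonneg h0

lemma condMass_local {U : Finset (Fin n)} {σc σc' : Fin n → Ω}
    (h : ∀ i ∈ U, σc i = σc' i) : condMass n μ U σc = condMass n μ U σc' := by
  funext σ
  rw [condMass_def, condMass_def]
  have hZ : Zf μ U σc = Zf μ U σc' :=
    Finset.sum_congr rfl fun τ _ => if_congr
      ⟨fun hτ i hi => (hτ i hi).trans (h i hi), fun hτ i hi => (hτ i hi).trans (h i hi).symm⟩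
      rfl rfl
  rw [hZ]
  congr 1
  refine if_congr ⟨fun hτ i hi => (hτ i hi).trans (h i hi),
    fun hτ i hi => (hτ i hi).trans (h i hi).symm⟩ rfl rfl

lemma phi_local {U : Finset (Fin n)} {σc σc' : Fin n → Ω}
    (h : ∀ i ∈ U, σc i = σc' i) : phi μ U σc = phi μ U σc' := by
  unfold phi; rw [condMass_local (μ := μ) h]

/-- **Decrement identity**: expected potential gain from one more pin. -/
lemma decrement (h0 : ∀ σ, 0 ≤ μ σ) (V : Finset (Fin n)) (y : Fin n) (hy : y ∉ V) :
    ∑ σc : Fin n → Ω, μ σc * phi μ (insert y V) σc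
    = ∑ σc : Fin n → Ω, μ σc * (phi μ V σc + psi μ y V σc) := by
  rw [tower h0 V y hy (phi μ (insert y V)) (fun σ τ hagree => phi_local hagree)]
  refine Finset.sum_congr rfl fun σc _ => ?_
  rcases eq_or_ne (μ σc) 0 with hμ | hμ
  · rw [hμ, zero_mul, zero_mul]
  have hZ : Zf μ V σc ≠ 0 :=
    fun h => hμ (le_antisymm (h ▸ mu_le_Zf h0) (h0 σc))
  congr 1
  -- pointwise identity
  set q : Ω → ℝ := fun b => marg1 n (condMass n μ V σc) y b with hq
  set p : Fin n → Ω → ℝ := fun x a => marg1 n (condMass n μ V σc) x a with hp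
  set m : Fin n → Ω → Ω → ℝ := fun x a b =>
    marg1 n (condMass n μ (insert y V) (Function.update σc y b)) x a with hm
  have e1 : ∀ x a, ∑ b : Ω, q b * m x a b = p x a := by
    intro x a
    rw [show ∑ b : Ω, q b * m x a b = ∑ b : Ω, marg2 n (condMass n μ V σc) x y a b from
      Finset.sum_congr rfl fun b _ => marg_product h0 V σc x y a b, sum_marg2_b]
  have e2 : ∑ b : Ω, q b = 1 := sum_marg1_q_eq_one hZ
  have key : ∀ x : Fin n, ∑ b : Ω, ∑ a : Ω, q b * (m x a b - p x a) ^ 2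
      = (∑ b : Ω, q b * ∑ a : Ω, (m x a b) ^ 2) - ∑ a : Ω, (p x a) ^ 2 := by
    intro x
    have expand : ∀ b a, q b * (m x a b - p x a) ^ 2
        = q b * (m x a b) ^ 2 - 2 * ((q b * m x a b) * p x a) + q b * (p x a) ^ 2 := by
      intro b a; ring
    calc ∑ b : Ω, ∑ a : Ω, q b * (m x a b - p x a) ^ 2
        = (∑ b : Ω, ∑ a : Ω, q b * (m x a b) ^ 2)
          - (∑ b : Ω, ∑ a : Ω, 2 * ((q b * m x a b) * p x a))
          + ∑ b : Ω, ∑ a : Ω, q b * (p x a) ^ 2 := by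
          rw [Finset.sum_congr rfl fun b _ => Finset.sum_congr rfl fun a _ => expand b a]
          simp only [Finset.sum_add_distrib, Finset.sum_sub_distrib]
      _ = (∑ b : Ω, q b * ∑ a : Ω, (m x a b) ^ 2)
          - 2 * ∑ a : Ω, (p x a) ^ 2 + ∑ a : Ω, (p x a) ^ 2 := by
          congr 1
          · congr 1
            · exact Finset.sum_congr rfl fun b _ => by rw [Finset.mul_sum]
            · rw [Finset.sum_comm, Finset.mul_sum]
              refine Finset.sum_congr rfl fun a _ => ?_
              rw [← Finset.mul_sum, ← Finset.sum_mul, e1, ← sq]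
          · calc ∑ b : Ω, ∑ a : Ω, q b * (p x a) ^ 2
                = ∑ b : Ω, q b * ∑ a : Ω, (p x a) ^ 2 :=
                  Finset.sum_congr rfl fun b _ => (Finset.mul_sum _ _ _).symm
              _ = (∑ b : Ω, q b) * ∑ a : Ω, (p x a) ^ 2 := (Finset.sum_mul _ _ _).symm
              _ = ∑ a : Ω, (p x a) ^ 2 := by rw [e2, one_mul]
      _ = (∑ b : Ω, q b * ∑ a : Ω, (m x a b) ^ 2) - ∑ a : Ω, (p x a) ^ 2 := by ring
  -- now assemble over x
  calc ∑ b : Ω, marg1 n (condMass n μ V σc) y b * phi μ (insert y V) (Function.update σc y b)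
      = ∑ x : Fin n, ∑ b : Ω, q b * ∑ a : Ω, (m x a b) ^ 2 := by
        rw [Finset.sum_comm]
        refine Finset.sum_congr rfl fun b _ => ?_
        rw [phi, Finset.mul_sum]
    _ = ∑ x : Fin n, (∑ a : Ω, (p x a) ^ 2 + ∑ b : Ω, ∑ a : Ω, q b * (m x a b - p x a) ^ 2) := by
        refine Finset.sum_congr rfl fun x _ => ?_
        rw [key x]; ring
    _ = phi μ V σc + psi μ y V σc := by
        rw [Finset.sum_add_distrib]; rfl

end PP4

namespace PP5
open Pinning PP
variable {Ω : Type*} [Fintype Ω] {n : ℕ}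

/-- Bernoulli(θ/n) weight of the pinned set `U`. -/
def Pw (n : ℕ) (θ : ℝ) (U : Finset (Fin n)) : ℝ :=
  (∏ i ∈ U, θ / n) * ∏ i ∈ Uᶜ, (1 - θ / n)

lemma Pw_eq_pow (θ : ℝ) (U : Finset (Fin n)) :
    Pw n θ U = (θ / n) ^ U.card * (1 - θ / n) ^ (n - U.card) := by
  rw [Pw, Finset.prod_const, Finset.prod_const, Finset.card_compl, Fintype.card_fin]

lemma sum_Pw (θ : ℝ) : ∑ U : Finset (Fin n), Pw n θ U = 1 := by
  have h := Finset.prod_add (fun _ : Fin n => θ / n) (fun _ : Fin n => 1 - θ / n) Finset.univ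
  simp only [add_sub_cancel, Finset.prod_const_one] at h
  rw [Finset.powerset_univ] at h
  rw [h]
  refine Finset.sum_congr rfl fun U _ => ?_
  rw [Pw, Finset.compl_eq_univ_sdiff]

lemma Pw_nonneg (hn : 0 < (n : ℝ)) {θ : ℝ} (h0 : 0 ≤ θ) (h1 : θ ≤ n) (U : Finset (Fin n)) :
    0 ≤ Pw n θ U := by
  rw [Pw_eq_pow]
  have hp : 0 ≤ θ / n := div_nonneg h0 hn.le
  have hq : 0 ≤ 1 - θ / n := by
    have : θ / n ≤ 1 := (div_le_one hn).mpr h1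
    linarith
  positivity

/-- reindexing subsets containing `y` by inserting `y`. -/
lemma reindex (y : Fin n) (f : Finset (Fin n) → ℝ) :
    ∑ U : Finset (Fin n), (if y ∈ U then f U else 0)
    = ∑ V : Finset (Fin n), (if y ∈ V then 0 else f (insert y V)) := by
  rw [← Finset.sum_filter (fun U => y ∈ U) f]
  have : ∀ V : Finset (Fin n), (if y ∈ V then (0:ℝ) else f (insert y V))
      = if y ∉ V then f (insert y V) else 0 := by
    intro V; split_ifs with h1 h2 <;> first | rfl | exact absurd h1 h2 | exact absurd h2 h1
  rw [Finset.sum_congr rfl fun V _ => this V, ← Finset.sum_filter (fun V => y ∉ V)]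
  refine Finset.sum_nbij' (fun U => U.erase y) (fun V => insert y V) ?_ ?_ ?_ ?_ ?_
  · intro U hU
    simp only [Finset.mem_filter, Finset.mem_univ, true_and] at *
    exact Finset.notMem_erase y U
  · intro V hV
    simp only [Finset.mem_filter, Finset.mem_univ, true_and] at *
    exact Finset.mem_insert_self y V
  · intro U hU
    simp only [Finset.mem_filter, Finset.mem_univ, true_and] at hU
    exact Finset.insert_erase hU
  · intro V hV
    simp only [Finset.mem_filter, Finset.mem_univ, true_and] at hV
    exact Finset.erase_insert hV
  · intro U hU
    simp only [Finset.mem_filter, Finset.mem_univ, true_and] at hU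
    rw [Finset.insert_erase hU]

end PP5

namespace PP6
open Pinning PP PP5
variable {Ω : Type*} [Fintype Ω] {n : ℕ}

def GG (n : ℕ) (g : Finset (Fin n) → ℝ) (θ : ℝ) : ℝ :=
  ∑ U : Finset (Fin n), Pw n θ U * g U

def GG' (n : ℕ) (g : Finset (Fin n) → ℝ) (θ : ℝ) : ℝ :=
  (1 / (n : ℝ)) * ∑ y : Fin n, ∑ V : Finset (Fin n),
    (if y ∈ V then 0 else
      (θ / n) ^ V.card * (1 - θ / n) ^ (n - 1 - V.card) * (g (insert y V) - g V))

lemma card_cast_eq (U : Finset (Fin n)) :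
    (U.card : ℝ) = ∑ y : Fin n, (if y ∈ U then (1:ℝ) else 0) := by
  rw [Finset.sum_boole]
  congr 1
  simp [Finset.filter_mem_eq_inter]

lemma card_compl_cast_eq (U : Finset (Fin n)) :
    ((n - U.card : ℕ) : ℝ) = ∑ y : Fin n, (if y ∈ U then (0:ℝ) else 1) := by
  have h1 : ∑ y : Fin n, (if y ∈ U then (0:ℝ) else 1) = ∑ y : Fin n, (if y ∈ Uᶜ then (1:ℝ) else 0) := by
    refine Finset.sum_congr rfl fun y _ => ?_
    by_cases h : y ∈ U <;> simp [h]
  rw [h1, Finset.sum_boole]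
  have h2 : Finset.univ.filter (fun y => y ∈ Uᶜ) = Uᶜ := by
    ext z; simp
  rw [h2, Finset.card_compl, Fintype.card_fin]

lemma sumA (g : Finset (Fin n) → ℝ) (p : ℝ) :
    ∑ U : Finset (Fin n), (U.card : ℝ) * p ^ (U.card - 1) * (1 - p) ^ (n - U.card) * g U
    = ∑ y : Fin n, ∑ V : Finset (Fin n),
        (if y ∈ V then 0 else p ^ V.card * (1 - p) ^ (n - 1 - V.card) * g (insert y V)) := by
  have step : ∀ U : Finset (Fin n),
      (U.card : ℝ) * p ^ (U.card - 1) * (1 - p) ^ (n - U.card) * g U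
      = ∑ y : Fin n, (if y ∈ U then p ^ (U.card - 1) * (1 - p) ^ (n - U.card) * g U else 0) := by
    intro U
    rw [card_cast_eq, Finset.sum_mul, Finset.sum_mul, Finset.sum_mul]
    refine Finset.sum_congr rfl fun y _ => ?_
    split_ifs with h
    · rw [one_mul]
    · rw [zero_mul, zero_mul, zero_mul]
  rw [Finset.sum_congr rfl fun U _ => step U, Finset.sum_comm]
  refine Finset.sum_congr rfl fun y _ => ?_
  rw [reindex y (fun U => p ^ (U.card - 1) * (1 - p) ^ (n - U.card) * g U)]
  refine Finset.sum_congr rfl fun V _ => ?_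
  split_ifs with h
  · rfl
  · rw [Finset.card_insert_of_notMem h, Nat.add_sub_cancel]
    have he : n - (V.card + 1) = n - 1 - V.card := by omega
    rw [he]

lemma sumB (g : Finset (Fin n) → ℝ) (p : ℝ) :
    ∑ U : Finset (Fin n), ((n - U.card : ℕ) : ℝ) * p ^ U.card * (1 - p) ^ (n - U.card - 1) * g U
    = ∑ y : Fin n, ∑ V : Finset (Fin n),
        (if y ∈ V then 0 else p ^ V.card * (1 - p) ^ (n - 1 - V.card) * g V) := by
  have step : ∀ U : Finset (Fin n),
      ((n - U.card : ℕ) : ℝ) * p ^ U.card * (1 - p) ^ (n - U.card - 1) * g U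
      = ∑ y : Fin n, (if y ∈ U then 0 else p ^ U.card * (1 - p) ^ (n - U.card - 1) * g U) := by
    intro U
    rw [card_compl_cast_eq, Finset.sum_mul, Finset.sum_mul, Finset.sum_mul]
    refine Finset.sum_congr rfl fun y _ => ?_
    split_ifs with h
    · rw [zero_mul, zero_mul, zero_mul]
    · rw [one_mul]
  rw [Finset.sum_congr rfl fun U _ => step U, Finset.sum_comm]
  refine Finset.sum_congr rfl fun y _ => ?_
  refine Finset.sum_congr rfl fun V _ => ?_
  split_ifs with h
  · rfl
  · have he : n - V.card - 1 = n - 1 - V.card := by omega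
    rw [he]

lemma hasDerivAt_GG (g : Finset (Fin n) → ℝ) (θ : ℝ) :
    HasDerivAt (GG n g) (GG' n g θ) θ := by
  have hGG : GG n g = fun θ =>
      ∑ U : Finset (Fin n), ((θ / n) ^ U.card * (1 - θ / n) ^ (n - U.card)) * g U := by
    funext t
    exact Finset.sum_congr rfl fun U _ => by rw [Pw_eq_pow]
  rw [hGG]
  have hterm : ∀ U : Finset (Fin n), HasDerivAt
      (fun t : ℝ => ((t / n) ^ U.card * (1 - t / n) ^ (n - U.card)) * g U)
      ((((U.card : ℝ) * (θ / n) ^ (U.card - 1) * (1 / n)) * (1 - θ / n) ^ (n - U.card)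
        + (θ / n) ^ U.card * (((n - U.card : ℕ) : ℝ) * (1 - θ / n) ^ (n - U.card - 1) * (-(1 / n)))) * g U) θ := by
    intro U
    have h1 : HasDerivAt (fun t : ℝ => t / n) (1 / n) θ := (hasDerivAt_id θ).div_const _
    have h2 : HasDerivAt (fun t : ℝ => (t / n) ^ U.card)
        ((U.card : ℝ) * (θ / n) ^ (U.card - 1) * (1 / n)) θ := h1.pow _
    have h3 : HasDerivAt (fun t : ℝ => 1 - t / n) (-(1 / n)) θ := h1.const_sub 1
    have h4 : HasDerivAt (fun t : ℝ => (1 - t / n) ^ (n - U.card))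
        (((n - U.card : ℕ) : ℝ) * (1 - θ / n) ^ (n - U.card - 1) * (-(1 / n))) θ := h3.pow _
    exact (h2.mul h4).mul_const _
  have hsum := HasDerivAt.sum (fun U (_ : U ∈ Finset.univ) => hterm U)
  convert hsum using 1
  · rfl
  · rfl
  · ext t; rw [Finset.sum_apply]
  -- identity of the derivative values
  have eA := sumA g (θ / n)
  have eB := sumB g (θ / n)
  rw [GG']
  calc (1 / (n:ℝ)) * ∑ y : Fin n, ∑ V : Finset (Fin n),
        (if y ∈ V then 0 else
          (θ / n) ^ V.card * (1 - θ / n) ^ (n - 1 - V.card) * (g (insert y V) - g V))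
      = (1 / (n:ℝ)) *
        ((∑ y : Fin n, ∑ V : Finset (Fin n),
          (if y ∈ V then 0 else (θ/n) ^ V.card * (1 - θ/n) ^ (n - 1 - V.card) * g (insert y V)))
        - ∑ y : Fin n, ∑ V : Finset (Fin n),
          (if y ∈ V then 0 else (θ/n) ^ V.card * (1 - θ/n) ^ (n - 1 - V.card) * g V)) := by
        rw [← Finset.sum_sub_distrib]
        congr 1
        refine Finset.sum_congr rfl fun y _ => ?_
        rw [← Finset.sum_sub_distrib]
        refine Finset.sum_congr rfl fun V _ => ?_
        split_ifs with h
        · ring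
        · ring
    _ = (1 / (n:ℝ)) *
        ((∑ U : Finset (Fin n), (U.card : ℝ) * (θ/n) ^ (U.card - 1) * (1 - θ/n) ^ (n - U.card) * g U)
        - ∑ U : Finset (Fin n), ((n - U.card : ℕ) : ℝ) * (θ/n) ^ U.card * (1 - θ/n) ^ (n - U.card - 1) * g U) := by
        rw [eA, eB]
    _ = ∑ U : Finset (Fin n),
        ((((U.card : ℝ) * (θ / n) ^ (U.card - 1) * (1 / n)) * (1 - θ / n) ^ (n - U.card)
          + (θ / n) ^ U.card * (((n - U.card : ℕ) : ℝ) * (1 - θ / n) ^ (n - U.card - 1) * (-(1 / n)))) * g U) := by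
        rw [mul_sub, Finset.mul_sum, Finset.mul_sum, ← Finset.sum_sub_distrib]
        refine Finset.sum_congr rfl fun U _ => ?_
        ring

end PP6

namespace PP7
open Pinning PP PP2 PP3 PP4
variable {Ω : Type*} [Fintype Ω] {n : ℕ} {μ : (Fin n → Ω) → ℝ}

/-- The total-variation-type quantity at a pair of coordinates is controlled by the
ℓ²-decrement. -/
lemma tv_le (h0 : ∀ σ, 0 ≤ μ σ) (U : Finset (Fin n)) (σc : Fin n → Ω) (x y : Fin n)
    {c : ℝ} (hc : 0 < c) :
    ∑ a : Ω, ∑ b : Ω,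
        max (marg2 n (condMass n μ U σc) x y a b
          - marg1 n (condMass n μ U σc) x a * marg1 n (condMass n μ U σc) y b) 0
    ≤ (Fintype.card Ω : ℝ) * Dxy μ U σc x y / (2 * c) + c / 2 := by
  set q : Ω → ℝ := fun b => marg1 n (condMass n μ U σc) y b with hq
  set p : Ω → ℝ := fun a => marg1 n (condMass n μ U σc) x a with hp
  set m : Ω → Ω → ℝ := fun a b =>
    marg1 n (condMass n μ (insert y U) (Function.update σc y b)) x a with hm
  have hqnn : ∀ b, 0 ≤ q b := fun b => marg1_nonneg h0
  have hL1 : ∑ a : Ω, ∑ b : Ω,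
      max (marg2 n (condMass n μ U σc) x y a b - p a * q b) 0
      ≤ ∑ a : Ω, ∑ b : Ω, q b * |m a b - p a| := by
    refine Finset.sum_le_sum fun a _ => Finset.sum_le_sum fun b _ => ?_
    have hr : marg2 n (condMass n μ U σc) x y a b = q b * m a b :=
      (marg_product h0 U σc x y a b).symm
    rw [hr]
    refine max_le ?_ (mul_nonneg (hqnn b) (abs_nonneg _))
    have : q b * m a b - p a * q b = q b * (m a b - p a) := by ring
    rw [this]
    exact mul_le_mul_of_nonneg_left (le_abs_self _) (hqnn b)
  set L : ℝ := ∑ a : Ω, ∑ b : Ω, q b * |m a b - p a| with hL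
  have hLnn : 0 ≤ L :=
    Finset.sum_nonneg fun a _ => Finset.sum_nonneg fun b _ =>
      mul_nonneg (hqnn b) (abs_nonneg _)
  set K : ℝ := (Fintype.card Ω : ℝ) * Dxy μ U σc x y with hK
  have hKnn : 0 ≤ K := mul_nonneg (Nat.cast_nonneg _) (Dxy_nonneg h0)
  have hcs : L ^ 2 ≤ K := by
    have h := Finset.sum_mul_sq_le_sq_mul_sq (Finset.univ : Finset (Ω × Ω))
      (fun ab => Real.sqrt (q ab.2)) (fun ab => Real.sqrt (q ab.2) * |m ab.1 ab.2 - p ab.1|)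
    have e1 : ∑ ab : Ω × Ω, Real.sqrt (q ab.2) * (Real.sqrt (q ab.2) * |m ab.1 ab.2 - p ab.1|)
        = L := by
      rw [Fintype.sum_prod_type, hL]
      refine Finset.sum_congr rfl fun a _ => Finset.sum_congr rfl fun b _ => ?_
      rw [← mul_assoc, Real.mul_self_sqrt (hqnn b)]
    have e2 : ∑ ab : Ω × Ω, Real.sqrt (q ab.2) ^ 2 = (Fintype.card Ω : ℝ) * ∑ b : Ω, q b := by
      rw [Fintype.sum_prod_type]
      calc ∑ a : Ω, ∑ b : Ω, Real.sqrt (q b) ^ 2 = ∑ a : Ω, ∑ b : Ω, q b :=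
            Finset.sum_congr rfl fun a _ => Finset.sum_congr rfl fun b _ =>
              Real.sq_sqrt (hqnn b)
        _ = (Fintype.card Ω : ℝ) * ∑ b : Ω, q b := by
            rw [Finset.sum_const, Finset.card_univ, nsmul_eq_mul]
    have e3 : ∑ ab : Ω × Ω, (Real.sqrt (q ab.2) * |m ab.1 ab.2 - p ab.1|) ^ 2
        = Dxy μ U σc x y := by
      calc ∑ ab : Ω × Ω, (Real.sqrt (q ab.2) * |m ab.1 ab.2 - p ab.1|) ^ 2
          = ∑ a : Ω, ∑ b : Ω, q b * (m a b - p a) ^ 2 := by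
            rw [Fintype.sum_prod_type]
            exact Finset.sum_congr rfl fun a _ => Finset.sum_congr rfl fun b _ => by
              rw [mul_pow, Real.sq_sqrt (hqnn b), sq_abs]
        _ = Dxy μ U σc x y := Finset.sum_comm
    have hqsum : ∑ b : Ω, q b ≤ 1 := by
      rw [hq]
      rw [sum_marg1_q]
      exact sum_condMass_le_one
    calc L ^ 2 = (∑ ab : Ω × Ω, Real.sqrt (q ab.2)
          * (Real.sqrt (q ab.2) * |m ab.1 ab.2 - p ab.1|)) ^ 2 := by rw [e1]
      _ ≤ (∑ ab : Ω × Ω, Real.sqrt (q ab.2) ^ 2)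
            * ∑ ab : Ω × Ω, (Real.sqrt (q ab.2) * |m ab.1 ab.2 - p ab.1|) ^ 2 := h
      _ = ((Fintype.card Ω : ℝ) * ∑ b : Ω, q b) * Dxy μ U σc x y := by rw [e2, e3]
      _ ≤ (Fintype.card Ω : ℝ) * 1 * Dxy μ U σc x y := by
          refine mul_le_mul_of_nonneg_right ?_ (Dxy_nonneg h0)
          exact mul_le_mul_of_nonneg_left hqsum (Nat.cast_nonneg _)
      _ = K := by rw [hK, mul_one]
  -- AM-GM conclusion
  have h2 : 2 * c * L ≤ K + c ^ 2 := by nlinarith [sq_nonneg (L - c)]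
  have hc2 : (0:ℝ) < 2 * c := by linarith
  calc ∑ a : Ω, ∑ b : Ω,
        max (marg2 n (condMass n μ U σc) x y a b - p a * q b) 0 ≤ L := hL1
    _ = (2 * c * L) / (2 * c) := by field_simp
    _ ≤ (K + c ^ 2) / (2 * c) := (div_le_div_iff_of_pos_right hc2).mpr h2
    _ = K / (2 * c) + c / 2 := by field_simp

end PP7

namespace PP8
open Pinning PP PP2 PP3 PP4 PP5 PP6
variable {Ω : Type*} [Fintype Ω] {n : ℕ} {μ : (Fin n → Ω) → ℝ}

lemma Dxy_pin (hy : y ∈ U) (σc : Fin n → Ω) (x : Fin n) : Dxy μ U σc x y = 0 := by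
  rw [Dxy]
  refine Finset.sum_eq_zero fun b _ => ?_
  by_cases hb : b = σc y
  · subst hb
    refine Finset.sum_eq_zero fun a _ => ?_
    rw [Finset.insert_eq_self.mpr hy, Function.update_eq_self, sub_self]
    rw [zero_pow (by norm_num), mul_zero]
  · have hq : marg1 n (condMass n μ U σc) y b = 0 := by
      rw [marg1_cond]
      have : N1 μ U σc y b = 0 := by
        refine Finset.sum_eq_zero fun τ _ => if_neg ?_
        rintro ⟨h1, h2⟩; exact hb (h1.symm.trans (h2 y hy))
      rw [this, zero_div]
    refine Finset.sum_eq_zero fun a _ => ?_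
    rw [hq, zero_mul]

def gphi (μ : (Fin n → Ω) → ℝ) (U : Finset (Fin n)) : ℝ :=
  ∑ σc : Fin n → Ω, μ σc * phi μ U σc

def Psi (μ : (Fin n → Ω) → ℝ) (y : Fin n) (V : Finset (Fin n)) : ℝ :=
  ∑ σc : Fin n → Ω, μ σc * psi μ y V σc

lemma Psi_nonneg (h0 : ∀ σ, 0 ≤ μ σ) {y V} : 0 ≤ Psi μ y V :=
  Finset.sum_nonneg fun σc _ => mul_nonneg (h0 σc) (psi_nonneg h0)

lemma gphi_insert (h0 : ∀ σ, 0 ≤ μ σ) {y : Fin n} {V : Finset (Fin n)} (hy : y ∉ V) :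
    gphi μ (insert y V) = gphi μ V + Psi μ y V := by
  rw [gphi, decrement h0 V y hy, gphi, Psi, ← Finset.sum_add_distrib]
  exact Finset.sum_congr rfl fun σc _ => by ring

/-- the expected total decrement, as a function of `θ`. -/
def RRf (μ : (Fin n → Ω) → ℝ) (θ : ℝ) : ℝ :=
  ∑ σc : Fin n → Ω, μ σc * ∑ U : Finset (Fin n), Pw n θ U * ∑ y : Fin n, psi μ y U σc

lemma card_lt_of_not_mem {U : Finset (Fin n)} {y : Fin n} (hy : y ∉ U) : U.card < n := by
  have h1 : U.card ≤ n := by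
    have := Finset.card_le_univ U
    simpa using this
  rcases h1.lt_or_eq with h | h
  · exact h
  · exfalso
    have : U = Finset.univ := Finset.eq_univ_of_card U (by rw [Fintype.card_fin]; exact h)
    exact hy (this ▸ Finset.mem_univ y)

lemma RRf_eq (h0 : ∀ σ, 0 ≤ μ σ) (hn : (n : ℝ) ≠ 0) (θ : ℝ) :
    RRf μ θ = (1 - θ / n) * ((n : ℝ) * GG' n (gphi μ) θ) := by
  have lhs : RRf μ θ = ∑ y : Fin n, ∑ U : Finset (Fin n), Pw n θ U * Psi μ y U := by
    calc RRf μ θ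
        = ∑ σc : Fin n → Ω, ∑ U : Finset (Fin n),
            ∑ y : Fin n, Pw n θ U * (μ σc * psi μ y U σc) := by
          refine Finset.sum_congr rfl fun σc _ => ?_
          rw [Finset.mul_sum]
          refine Finset.sum_congr rfl fun U _ => ?_
          rw [← mul_assoc, Finset.mul_sum]
          exact Finset.sum_congr rfl fun y _ => by ring
      _ = ∑ U : Finset (Fin n), ∑ σc : Fin n → Ω,
            ∑ y : Fin n, Pw n θ U * (μ σc * psi μ y U σc) := Finset.sum_comm
      _ = ∑ U : Finset (Fin n), ∑ y : Fin n,
            ∑ σc : Fin n → Ω, Pw n θ U * (μ σc * psi μ y U σc) :=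
          Finset.sum_congr rfl fun U _ => Finset.sum_comm
      _ = ∑ y : Fin n, ∑ U : Finset (Fin n),
            ∑ σc : Fin n → Ω, Pw n θ U * (μ σc * psi μ y U σc) := Finset.sum_comm
      _ = ∑ y : Fin n, ∑ U : Finset (Fin n), Pw n θ U * Psi μ y U := by
          refine Finset.sum_congr rfl fun y _ => Finset.sum_congr rfl fun U _ => ?_
          rw [Psi, Finset.mul_sum]
  rw [lhs, GG']
  rw [show ((n:ℝ) * ((1 / (n : ℝ)) * ∑ y : Fin n, ∑ V : Finset (Fin n),
      (if y ∈ V then 0 else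
        (θ / n) ^ V.card * (1 - θ / n) ^ (n - 1 - V.card)
          * (gphi μ (insert y V) - gphi μ V))))
    = ∑ y : Fin n, ∑ V : Finset (Fin n),
      (if y ∈ V then 0 else
        (θ / n) ^ V.card * (1 - θ / n) ^ (n - 1 - V.card)
          * (gphi μ (insert y V) - gphi μ V)) from by
      rw [← mul_assoc, mul_one_div_cancel hn, one_mul]]
  rw [Finset.mul_sum]
  refine Finset.sum_congr rfl fun y _ => ?_
  rw [Finset.mul_sum]
  refine Finset.sum_congr rfl fun U _ => ?_
  by_cases hy : y ∈ U
  · rw [if_pos hy, mul_zero]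
    have : Psi μ y U = 0 := by
      rw [Psi]
      refine Finset.sum_eq_zero fun σc _ => ?_
      have : psi μ y U σc = 0 := Finset.sum_eq_zero fun x _ => Dxy_pin hy σc x
      rw [this, mul_zero]
    rw [this, mul_zero]
  · rw [if_neg hy, gphi_insert h0 hy, add_sub_cancel_left]
    rw [Pw_eq_pow]
    have hcard : n - U.card = (n - 1 - U.card) + 1 := by
      have := card_lt_of_not_mem hy; omega
    rw [hcard, pow_succ]
    ring

lemma GG'_nonneg (h0 : ∀ σ, 0 ≤ μ σ) (hn : 0 < (n : ℝ)) {θ : ℝ} (hθ0 : 0 ≤ θ)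
    (hθn : θ ≤ n) : 0 ≤ GG' n (gphi μ) θ := by
  rw [GG']
  have hp0 : 0 ≤ θ / n := div_nonneg hθ0 hn.le
  have hp1 : 0 ≤ 1 - θ / n := by
    have : θ / n ≤ 1 := (div_le_one hn).mpr hθn
    linarith
  refine mul_nonneg (by positivity) (Finset.sum_nonneg fun y _ =>
    Finset.sum_nonneg fun V _ => ?_)
  split_ifs with h
  · exact le_rfl
  · rw [gphi_insert h0 h, add_sub_cancel_left]
    exact mul_nonneg (mul_nonneg (pow_nonneg hp0 _) (pow_nonneg hp1 _)) (Psi_nonneg h0)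

lemma RRf_le (h0 : ∀ σ, 0 ≤ μ σ) (hn : 0 < (n : ℝ)) {θ : ℝ} (hθ0 : 0 ≤ θ) (hθn : θ ≤ n) :
    RRf μ θ ≤ (n : ℝ) * GG' n (gphi μ) θ := by
  rw [RRf_eq h0 hn.ne' θ]
  have h1 : 0 ≤ (n : ℝ) * GG' n (gphi μ) θ :=
    mul_nonneg hn.le (GG'_nonneg h0 hn hθ0 hθn)
  nlinarith [div_nonneg hθ0 hn.le]

lemma phi_le (h0 : ∀ σ, 0 ≤ μ σ) (U : Finset (Fin n)) (σc : Fin n → Ω) :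
    phi μ U σc ≤ n := by
  rw [phi]
  calc ∑ x : Fin n, ∑ a : Ω, (marg1 n (condMass n μ U σc) x a) ^ 2
      ≤ ∑ x : Fin n, (1 : ℝ) := by
        refine Finset.sum_le_sum fun x _ => ?_
        have hm1 : ∀ a : Ω, marg1 n (condMass n μ U σc) x a ≤ 1 := by
          intro a
          calc marg1 n (condMass n μ U σc) x a
              ≤ ∑ σ : Fin n → Ω, condMass n μ U σc σ := by
                rw [marg1]
                refine Finset.sum_le_sum fun σ _ => ?_
                split_ifs
                · exact le_rfl
                · exact condMass_nonneg h0 σ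
            _ ≤ 1 := sum_condMass_le_one
        calc ∑ a : Ω, (marg1 n (condMass n μ U σc) x a) ^ 2
            ≤ ∑ a : Ω, marg1 n (condMass n μ U σc) x a := by
              refine Finset.sum_le_sum fun a _ => ?_
              have hnn := marg1_nonneg (U := U) (σc := σc) h0 (y := x) (b := a)
              nlinarith [hm1 a]
          _ = ∑ σ : Fin n → Ω, condMass n μ U σc σ := sum_marg1_q
          _ ≤ 1 := sum_condMass_le_one
    _ = n := by rw [Finset.sum_const, Finset.card_univ, Fintype.card_fin, nsmul_eq_mul, mul_one]

lemma gphi_nonneg (h0 : ∀ σ, 0 ≤ μ σ) (U : Finset (Fin n)) : 0 ≤ gphi μ U :=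
  Finset.sum_nonneg fun σc _ => mul_nonneg (h0 σc)
    (Finset.sum_nonneg fun x _ => Finset.sum_nonneg fun a _ => sq_nonneg _)

lemma gphi_le (h0 : ∀ σ, 0 ≤ μ σ) (hsum : ∑ σ : Fin n → Ω, μ σ = 1) (U : Finset (Fin n)) :
    gphi μ U ≤ n := by
  calc gphi μ U ≤ ∑ σc : Fin n → Ω, μ σc * n :=
        Finset.sum_le_sum fun σc _ => mul_le_mul_of_nonneg_left (phi_le h0 U σc) (h0 σc)
    _ = n := by rw [← Finset.sum_mul, hsum, one_mul]

lemma GG_le (h0 : ∀ σ, 0 ≤ μ σ) (hsum : ∑ σ : Fin n → Ω, μ σ = 1) (hn : 0 < (n : ℝ))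
    {θ : ℝ} (hθ0 : 0 ≤ θ) (hθn : θ ≤ n) : GG n (gphi μ) θ ≤ n := by
  calc GG n (gphi μ) θ ≤ ∑ U : Finset (Fin n), Pw n θ U * n :=
        Finset.sum_le_sum fun U _ => mul_le_mul_of_nonneg_left (gphi_le h0 hsum U)
          (Pw_nonneg hn hθ0 hθn U)
    _ = n := by rw [← Finset.sum_mul, sum_Pw, one_mul]

lemma GG_nonneg (h0 : ∀ σ, 0 ≤ μ σ) (hn : 0 < (n : ℝ)) {θ : ℝ} (hθ0 : 0 ≤ θ) (hθn : θ ≤ n) :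
    0 ≤ GG n (gphi μ) θ :=
  Finset.sum_nonneg fun U _ => mul_nonneg (Pw_nonneg hn hθ0 hθn U) (gphi_nonneg h0 U)

-- continuity
lemma continuous_Pw (U : Finset (Fin n)) : Continuous fun θ : ℝ => Pw n θ U := by
  unfold Pw
  exact (continuous_finset_prod _ fun i _ => continuous_id.div_const _).mul
    (continuous_finset_prod _ fun i _ => continuous_const.sub (continuous_id.div_const _))

lemma continuous_PwSum (w : Finset (Fin n) → ℝ) :
    Continuous fun θ : ℝ => ∑ U : Finset (Fin n), Pw n θ U * w U :=
  continuous_finset_sum _ fun U _ => (continuous_Pw U).mul continuous_const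

lemma continuous_GG (g : Finset (Fin n) → ℝ) : Continuous (GG n g) := continuous_PwSum g

lemma continuous_GG' (g : Finset (Fin n) → ℝ) : Continuous (GG' n g) := by
  unfold GG'
  refine continuous_const.mul (continuous_finset_sum _ fun y _ =>
    continuous_finset_sum _ fun V _ => ?_)
  by_cases h : y ∈ V
  · simp only [if_pos h]; exact continuous_const
  · simp only [if_neg h]
    exact (((continuous_id.div_const _).pow _).mul
      ((continuous_const.sub (continuous_id.div_const _)).pow _)).mul continuous_const

lemma continuous_RRf : Continuous (RRf μ) := by
  unfold RRf
  exact continuous_finset_sum _ fun σc _ => continuous_const.mul (continuous_PwSum _)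

end PP8


set_option maxHeartbeats 1000000 in
open Pinning PP PP2 PP3 PP4 PP5 PP6 PP7 PP8 in
theorem PPFinal.pinning_main (Ω : Type*) [Fintype Ω] [Nonempty Ω] (ε : ℝ) (hε : 0 < ε) :
    ∃ T : ℝ, 0 < T ∧ ∀ n : ℕ, T < n → ∀ μ : (Fin n → Ω) → ℝ,
      (∀ σ, 0 ≤ μ σ) → (∑ σ : Fin n → Ω, μ σ = 1) →
      1 - ε ≤ T⁻¹ * ∫ θ in (0 : ℝ)..T,
        ∑ σc : Fin n → Ω, μ σc *
          ∑ U : Finset (Fin n),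
            (∏ i ∈ U, θ / n) * (∏ i ∈ Uᶜ, (1 - θ / n)) *
              (if epsSym n (condMass n μ U σc) ε then 1 else 0) := by
  classical
  set K : ℝ := (Fintype.card Ω : ℝ) with hKdef
  have hK1 : 1 ≤ K := by
    rw [hKdef]
    exact_mod_cast Nat.one_le_iff_ne_zero.mpr (Fintype.card_ne_zero)
  set T : ℝ := K / ε ^ 4 + 1 with hTdef
  have hT0 : 0 < T := by
    have : 0 ≤ K / ε ^ 4 := div_nonneg (by linarith) (by positivity)
    rw [hTdef]; linarith
  refine ⟨T, hT0, ?_⟩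
  intro n hTn μ h0 hsum
  have hn0 : 0 < (n : ℝ) := lt_trans hT0 hTn
  have hTn' : T ≤ (n : ℝ) := hTn.le
  set c : ℝ := ε ^ 2 with hcdef
  have hc : 0 < c := by positivity
  set k₁ : ℝ := ε⁻¹ * (K / (2 * c)) * ((n : ℝ) ^ 2)⁻¹ with hk1def
  set k₂ : ℝ := ε⁻¹ * (c / 2) with hk2def
  have hk1nn : 0 ≤ k₁ := by
    rw [hk1def]
    have : (0:ℝ) ≤ K := by linarith
    positivity
  set f : ℝ → ℝ := fun θ => ∑ σc : Fin n → Ω, μ σc *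
      ∑ U : Finset (Fin n), Pw n θ U *
        (if epsSym n (condMass n μ U σc) ε then (1:ℝ) else 0) with hfdef
  -- pointwise lower bound on the success probability
  have hpt : ∀ θ : ℝ, 0 ≤ θ → θ ≤ (n : ℝ) → (1 - k₂) - k₁ * RRf μ θ ≤ f θ := by
    intro θ hθ0 hθn
    have hPw : ∀ U : Finset (Fin n), 0 ≤ Pw n θ U := Pw_nonneg hn0 hθ0 hθn
    -- the TV double sum
    set tvS : (Fin n → Ω) → Finset (Fin n) → ℝ := fun σc U =>
      ∑ x₁ : Fin n, ∑ x₂ : Fin n, (∑ a : Ω, ∑ b : Ω,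
        max (marg2 n (condMass n μ U σc) x₁ x₂ a b
          - marg1 n (condMass n μ U σc) x₁ a * marg1 n (condMass n μ U σc) x₂ b) 0)
      with htvS
    have htv_nonneg : ∀ σc U, 0 ≤ tvS σc U := fun σc U =>
      Finset.sum_nonneg fun x₁ _ => Finset.sum_nonneg fun x₂ _ =>
        Finset.sum_nonneg fun a _ => Finset.sum_nonneg fun b _ => le_max_right _ _
    have step_ind : ∀ (σc : Fin n → Ω) (U : Finset (Fin n)),
        1 - ε⁻¹ * (((n : ℝ) ^ 2)⁻¹ * tvS σc U)
          ≤ (if epsSym n (condMass n μ U σc) ε then (1:ℝ) else 0) := by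
      intro σc U
      by_cases hsym : epsSym n (condMass n μ U σc) ε
      · rw [if_pos hsym]
        have : 0 ≤ ε⁻¹ * (((n : ℝ) ^ 2)⁻¹ * tvS σc U) := by
          have := htv_nonneg σc U
          positivity
        linarith
      · rw [if_neg hsym]
        rw [epsSym, not_lt] at hsym
        have h1 : 1 ≤ ε⁻¹ * (((n : ℝ) ^ 2)⁻¹ * tvS σc U) := by
          calc (1:ℝ) = ε⁻¹ * ε := by rw [inv_mul_cancel₀ hε.ne']
            _ ≤ ε⁻¹ * (((n : ℝ) ^ 2)⁻¹ * tvS σc U) :=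
              mul_le_mul_of_nonneg_left hsym (inv_nonneg.mpr hε.le)
        linarith
    have step_tv : ∀ (σc : Fin n → Ω) (U : Finset (Fin n)),
        tvS σc U ≤ K / (2 * c) * (∑ y : Fin n, psi μ y U σc) + (n : ℝ) ^ 2 * (c / 2) := by
      intro σc U
      have h1 : tvS σc U ≤ ∑ x₁ : Fin n, ∑ x₂ : Fin n,
          (K * Dxy μ U σc x₁ x₂ / (2 * c) + c / 2) :=
        Finset.sum_le_sum fun x₁ _ => Finset.sum_le_sum fun x₂ _ =>
          tv_le h0 U σc x₁ x₂ hc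
      have h2 : ∑ x₁ : Fin n, ∑ x₂ : Fin n, (K * Dxy μ U σc x₁ x₂ / (2 * c) + c / 2)
          = K / (2 * c) * (∑ x₁ : Fin n, ∑ x₂ : Fin n, Dxy μ U σc x₁ x₂)
            + (n : ℝ) ^ 2 * (c / 2) := by
        have hcount2 : ∑ _x₂ : Fin n, (c/2) = (n:ℝ) * (c/2) := by
          rw [Finset.sum_const, Finset.card_univ, Fintype.card_fin, nsmul_eq_mul]
        calc ∑ x₁ : Fin n, ∑ x₂ : Fin n, (K * Dxy μ U σc x₁ x₂ / (2 * c) + c / 2)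
            = ∑ x₁ : Fin n,
                (K / (2 * c) * (∑ x₂ : Fin n, Dxy μ U σc x₁ x₂) + (n:ℝ) * (c/2)) := by
              refine Finset.sum_congr rfl fun x₁ _ => ?_
              rw [Finset.sum_add_distrib, hcount2, Finset.mul_sum]
              congr 1
              exact Finset.sum_congr rfl fun x₂ _ => by ring
          _ = (∑ x₁ : Fin n, K / (2 * c) * (∑ x₂ : Fin n, Dxy μ U σc x₁ x₂))
                + ∑ _x₁ : Fin n, (n:ℝ) * (c/2) := Finset.sum_add_distrib
          _ = K / (2 * c) * (∑ x₁ : Fin n, ∑ x₂ : Fin n, Dxy μ U σc x₁ x₂)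
                + (n : ℝ) ^ 2 * (c / 2) := by
              rw [← Finset.mul_sum, Finset.sum_const, Finset.card_univ, Fintype.card_fin,
                nsmul_eq_mul]
              ring
      have h3 : ∑ x₁ : Fin n, ∑ x₂ : Fin n, Dxy μ U σc x₁ x₂
          = ∑ y : Fin n, psi μ y U σc := by
        rw [Finset.sum_comm]
        exact Finset.sum_congr rfl fun y _ => rfl
      calc tvS σc U ≤ _ := h1
        _ = _ := h2
        _ = K / (2 * c) * (∑ y : Fin n, psi μ y U σc) + (n : ℝ) ^ 2 * (c / 2) := by
            rw [h3]
    have hnn2 : ((n : ℝ) ^ 2)⁻¹ * (n : ℝ) ^ 2 = 1 := inv_mul_cancel₀ (by positivity)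
    have hq : ∀ dd : ℝ, ε⁻¹ * (((n : ℝ) ^ 2)⁻¹ * (K / (2 * c) * dd + (n : ℝ) ^ 2 * (c / 2)))
        = k₁ * dd + k₂ := by
      intro dd
      have hnsq : ((n:ℝ)^2) ≠ 0 := by positivity
      rw [hk1def, hk2def, hcdef]
      field_simp
    -- combine
    have hchain : ∀ (σc : Fin n → Ω) (U : Finset (Fin n)),
        1 - (k₁ * (∑ y : Fin n, psi μ y U σc) + k₂)
          ≤ (if epsSym n (condMass n μ U σc) ε then (1:ℝ) else 0) := by
      intro σc U
      refine le_trans ?_ (step_ind σc U)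
      have := step_tv σc U
      rw [← hq (∑ y : Fin n, psi μ y U σc)]
      have hmono : ε⁻¹ * (((n : ℝ) ^ 2)⁻¹ * tvS σc U)
          ≤ ε⁻¹ * (((n : ℝ) ^ 2)⁻¹
            * (K / (2 * c) * (∑ y : Fin n, psi μ y U σc) + (n : ℝ) ^ 2 * (c / 2))) := by
        refine mul_le_mul_of_nonneg_left ?_ (inv_nonneg.mpr hε.le)
        exact mul_le_mul_of_nonneg_left this (inv_nonneg.mpr (by positivity))
      linarith
    -- sum up
    have hsum1 : ∑ σc : Fin n → Ω, μ σc *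
        ∑ U : Finset (Fin n), Pw n θ U * (1 - (k₁ * (∑ y : Fin n, psi μ y U σc) + k₂))
        ≤ f θ := by
      rw [hfdef]
      refine Finset.sum_le_sum fun σc _ => mul_le_mul_of_nonneg_left ?_ (h0 σc)
      exact Finset.sum_le_sum fun U _ =>
        mul_le_mul_of_nonneg_left (hchain σc U) (hPw U)
    refine le_trans (le_of_eq ?_) hsum1
    -- algebraic identity
    have inner : ∀ σc : Fin n → Ω,
        ∑ U : Finset (Fin n), Pw n θ U * (1 - (k₁ * (∑ y : Fin n, psi μ y U σc) + k₂))
        = (1 - k₂) - k₁ * ∑ U : Finset (Fin n), Pw n θ U * (∑ y : Fin n, psi μ y U σc) := by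
      intro σc
      have e : ∀ U : Finset (Fin n),
          Pw n θ U * (1 - (k₁ * (∑ y : Fin n, psi μ y U σc) + k₂))
          = (1 - k₂) * Pw n θ U - k₁ * (Pw n θ U * (∑ y : Fin n, psi μ y U σc)) := by
        intro U; ring
      rw [Finset.sum_congr rfl fun U _ => e U, Finset.sum_sub_distrib,
        ← Finset.mul_sum, ← Finset.mul_sum, sum_Pw, mul_one]
    calc (1 - k₂) - k₁ * RRf μ θ
        = ∑ σc : Fin n → Ω, μ σc *
            ((1 - k₂) - k₁ * ∑ U : Finset (Fin n), Pw n θ U * (∑ y : Fin n, psi μ y U σc)) := by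
          rw [RRf]
          rw [Finset.sum_congr rfl fun (σc : Fin n → Ω) (_ : σc ∈ Finset.univ) =>
            show μ σc * ((1 - k₂) - k₁ * ∑ U : Finset (Fin n),
                Pw n θ U * (∑ y : Fin n, psi μ y U σc))
              = (1 - k₂) * μ σc - k₁ * (μ σc * ∑ U : Finset (Fin n),
                Pw n θ U * ∑ y : Fin n, psi μ y U σc) from by ring]
          rw [Finset.sum_sub_distrib, ← Finset.mul_sum, ← Finset.mul_sum, hsum, mul_one]
      _ = ∑ σc : Fin n → Ω, μ σc *
            ∑ U : Finset (Fin n), Pw n θ U * (1 - (k₁ * (∑ y : Fin n, psi μ y U σc) + k₂)) := by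
          exact Finset.sum_congr rfl fun σc _ => by rw [inner σc]
  -- continuity and integrability
  have hcontf : Continuous f := by
    rw [hfdef]
    exact continuous_finset_sum _ fun σc _ => continuous_const.mul (continuous_PwSum _)
  have hcontL : Continuous fun θ => (1 - k₂) - k₁ * RRf μ θ :=
    continuous_const.sub (continuous_const.mul continuous_RRf)
  -- integral comparison
  have hint1 : (∫ θ in (0:ℝ)..T, ((1 - k₂) - k₁ * RRf μ θ)) ≤ ∫ θ in (0:ℝ)..T, f θ := by
    refine intervalIntegral.integral_mono_on hT0.le
      (hcontL.intervalIntegrable _ _) (hcontf.intervalIntegrable _ _) ?_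
    intro θ hθ
    exact hpt θ hθ.1 (hθ.2.trans hTn')
  -- compute the LHS integral
  have hint2 : (∫ θ in (0:ℝ)..T, ((1 - k₂) - k₁ * RRf μ θ))
      = T * (1 - k₂) - k₁ * ∫ θ in (0:ℝ)..T, RRf μ θ := by
    rw [intervalIntegral.integral_sub (g := fun θ => k₁ * RRf μ θ) intervalIntegrable_const
      ((continuous_const.mul continuous_RRf).intervalIntegrable _ _),
      intervalIntegral.integral_const, intervalIntegral.integral_const_mul,
      sub_zero, smul_eq_mul, mul_comm]
  -- bound the decrement integral
  have hint3 : (∫ θ in (0:ℝ)..T, RRf μ θ) ≤ (n : ℝ) ^ 2 := by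
    have hmono : (∫ θ in (0:ℝ)..T, RRf μ θ)
        ≤ ∫ θ in (0:ℝ)..T, (n : ℝ) * GG' n (gphi μ) θ := by
      refine intervalIntegral.integral_mono_on hT0.le
        (continuous_RRf.intervalIntegrable _ _)
        ((continuous_const.mul (continuous_GG' (gphi μ))).intervalIntegrable _ _) ?_
      intro θ hθ
      exact RRf_le h0 hn0 hθ.1 (hθ.2.trans hTn')
    have hftc : (∫ θ in (0:ℝ)..T, GG' n (gphi μ) θ)
        = GG n (gphi μ) T - GG n (gphi μ) 0 :=
      intervalIntegral.integral_eq_sub_of_hasDerivAt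
        (fun θ _ => hasDerivAt_GG (gphi μ) θ)
        ((continuous_GG' (gphi μ)).intervalIntegrable _ _)
    have hGGT : GG n (gphi μ) T ≤ n := GG_le h0 hsum hn0 hT0.le hTn'
    have hGG0 : 0 ≤ GG n (gphi μ) 0 := GG_nonneg h0 hn0 le_rfl hn0.le
    calc (∫ θ in (0:ℝ)..T, RRf μ θ)
        ≤ ∫ θ in (0:ℝ)..T, (n : ℝ) * GG' n (gphi μ) θ := hmono
      _ = (n : ℝ) * (GG n (gphi μ) T - GG n (gphi μ) 0) := by
          rw [intervalIntegral.integral_const_mul, hftc]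
      _ ≤ (n : ℝ) ^ 2 := by nlinarith
  -- final numeric computation
  have hRRnn : 0 ≤ k₁ * ∫ θ in (0:ℝ)..T, RRf μ θ → True := fun _ => trivial
  have hgoal : 1 - ε ≤ T⁻¹ * ∫ θ in (0:ℝ)..T, f θ := by
    have h1 : T⁻¹ * (∫ θ in (0:ℝ)..T, ((1 - k₂) - k₁ * RRf μ θ))
        ≤ T⁻¹ * ∫ θ in (0:ℝ)..T, f θ :=
      mul_le_mul_of_nonneg_left hint1 (inv_nonneg.mpr hT0.le)
    refine le_trans ?_ h1
    rw [hint2]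
    have hk2val : k₂ = ε / 2 := by
      rw [hk2def, hcdef]
      calc ε⁻¹ * (ε ^ 2 / 2) = (ε⁻¹ * ε) * (ε / 2) := by ring
        _ = ε / 2 := by rw [inv_mul_cancel₀ hε.ne', one_mul]
    have hk1n : k₁ * (n:ℝ)^2 = K / (2 * ε^3) := by
      have hnsq : ((n:ℝ)^2) ≠ 0 := by positivity
      rw [hk1def, hcdef]
      field_simp
    have hKT : K ≤ T * ε ^ 4 := by
      have he4 : (0:ℝ) < ε ^ 4 := by positivity
      have hTe : T * ε ^ 4 = K + ε ^ 4 := by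
        rw [hTdef, add_mul, one_mul, div_mul_cancel₀ _ he4.ne']
      linarith
    have hbound : k₁ * (∫ θ in (0:ℝ)..T, RRf μ θ) ≤ K / (2 * ε ^ 3) := by
      calc k₁ * (∫ θ in (0:ℝ)..T, RRf μ θ) ≤ k₁ * (n:ℝ)^2 :=
            mul_le_mul_of_nonneg_left hint3 hk1nn
        _ = K / (2 * ε^3) := hk1n
    have hfin : K / (2 * ε ^ 3) ≤ T * (ε / 2) := by
      rw [div_le_iff₀ (by positivity : (0:ℝ) < 2 * ε ^ 3)]
      calc K ≤ T * ε ^ 4 := hKT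
        _ = T * (ε / 2) * (2 * ε ^ 3) := by ring
    calc 1 - ε = T⁻¹ * (T * (1 - ε)) := by field_simp
      _ ≤ T⁻¹ * (T * (1 - k₂) - k₁ * ∫ θ in (0:ℝ)..T, RRf μ θ) := by
          refine mul_le_mul_of_nonneg_left ?_ (inv_nonneg.mpr hT0.le)
          rw [hk2val]
          nlinarith [hbound, hfin]
  exact hgoal


open Pinning in
/-- **The Pinning Lemma.** For every finite `Ω` and `ε>0` there is `T=T(ε,Ω)>0` such that
for all `n>T` and every probability mass function `μ` on `Ω^n`: drawing `σc ∼ μ`,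
`θ` uniform on `(0,T)` and `U ⊆ [n]` by including each coordinate independently with
probability `θ/n`, the conditioned measure `μ̌` is `ε`-symmetric with probability
at least `1−ε`. -/
theorem pinning_lemma (Ω : Type*) [Fintype Ω] [Nonempty Ω] (ε : ℝ) (hε : 0 < ε) :
    ∃ T : ℝ, 0 < T ∧ ∀ n : ℕ, T < n → ∀ μ : (Fin n → Ω) → ℝ,
      (∀ σ, 0 ≤ μ σ) → (∑ σ : Fin n → Ω, μ σ = 1) →
      1 - ε ≤ T⁻¹ * ∫ θ in (0 : ℝ)..T,
        ∑ σc : Fin n → Ω, μ σc *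
          ∑ U : Finset (Fin n),
            (∏ i ∈ U, θ / n) * (∏ i ∈ Uᶜ, (1 - θ / n)) *
              (if epsSym n (condMass n μ U σc) ε then 1 else 0) := PPFinal.pinning_main Ω ε hε
end
end
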